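/- arXiv:2404.19731 — 5 statements merged into one kernel-verified Lean document; each statement's English description precedes it below -/
import Mathlib

section
/- For any prime p and positive integer j, the formal power series identity holds: ((q;q)_∞)^(p^j) ≡ ((q^p;q^p)_∞)^(p^(j-1)) (mod p^j), i.e., every coefficient of the difference of the two power series ∏_{k≥1}(1-q^k)^(p^j) and ∏_{k≥1}(1-q^(pk))^(p^(j-1)) is divisible by p^j. -/
open PowerSeries Finset Filter

/-- `f k` is the formal power series `∏_{j≥1} (1 - q^(k·j))` over `ℤ`,
defined coefficientwise via truncated finite products (factors with `k·j > n`
do not affect the coefficient of `q^n`). -/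
noncomputable def f (k : ℕ) : PowerSeries ℤ :=
  PowerSeries.mk fun n =>
    PowerSeries.coeff n (∏ j ∈ Finset.Icc 1 n, (1 - (PowerSeries.X : PowerSeries ℤ) ^ (k * j)))

lemma coeff_prod_stable {R : Type*} [CommRing R] (k : ℕ) (hk : 1 ≤ k) {i n m : ℕ}
    (hin : i ≤ n) (hnm : n ≤ m) :
    PowerSeries.coeff i (∏ j ∈ Finset.Icc 1 m, (1 - (PowerSeries.X : PowerSeries R) ^ (k * j)))
      = PowerSeries.coeff i
        (∏ j ∈ Finset.Icc 1 n, (1 - (PowerSeries.X : PowerSeries R) ^ (k * j))) := by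
  induction m with
  | zero =>
    have hn0 : n = 0 := by omega
    subst hn0; rfl
  | succ m ih =>
    rcases Nat.lt_or_ge n (m + 1) with h | h
    · rw [Finset.prod_Icc_succ_top (by omega : 1 ≤ m + 1)]
      rw [mul_sub, mul_one, map_sub, PowerSeries.coeff_mul_X_pow']
      have hnot : ¬ (k * (m + 1) ≤ i) := by
        have : m + 1 ≤ k * (m + 1) := Nat.le_mul_of_pos_left _ (by omega)
        omega
      rw [if_neg hnot, sub_zero]
      exact ih (by omega)
    · have hn : n = m + 1 := by omega
      subst hn; rfl

lemma coeff_pow_congr {R : Type*} [CommRing R] {A B : PowerSeries R} {n : ℕ}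
    (h : ∀ i ≤ n, PowerSeries.coeff i A = PowerSeries.coeff i B) (e : ℕ) :
    ∀ i ≤ n, PowerSeries.coeff i (A ^ e) = PowerSeries.coeff i (B ^ e) := by
  intro i hi
  have hdvd : (PowerSeries.X : PowerSeries R) ^ (n + 1) ∣ A - B := by
    rw [PowerSeries.X_pow_dvd_iff]
    intro m hm
    rw [map_sub, h m (by omega), sub_self]
  have hdvd2 : (PowerSeries.X : PowerSeries R) ^ (n + 1) ∣ A ^ e - B ^ e :=
    hdvd.trans (sub_dvd_pow_sub_pow A B e)
  have := (PowerSeries.X_pow_dvd_iff.mp hdvd2) i (by omega)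
  rw [map_sub, sub_eq_zero] at this
  exact this

lemma C_dvd_of_forall_dvd {c : ℤ} {A : PowerSeries ℤ}
    (h : ∀ n, c ∣ PowerSeries.coeff n A) : ((PowerSeries.C (R := ℤ)) c) ∣ A := by
  refine ⟨PowerSeries.mk fun n => PowerSeries.coeff n A / c, ?_⟩
  ext n
  rw [PowerSeries.coeff_C_mul, PowerSeries.coeff_mk, Int.mul_ediv_cancel' (h n)]

lemma key_mod_p (p : ℕ) (hp : p.Prime) :
    ∀ n, (p : ℤ) ∣ PowerSeries.coeff n (f 1 ^ p - f p) := by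
  haveI : Fact p.Prime := ⟨hp⟩
  intro n
  rw [← ZMod.intCast_zmod_eq_zero_iff_dvd]
  set φ := Int.castRingHom (ZMod p)
  have hcoe : ((PowerSeries.coeff n (f 1 ^ p - f p) : ℤ) : ZMod p)
      = PowerSeries.coeff n (PowerSeries.map φ (f 1 ^ p - f p)) := by
    rw [PowerSeries.coeff_map]; rfl
  rw [hcoe, map_sub, map_pow]
  -- B over ZMod p
  set B : PowerSeries (ZMod p) :=
    ∏ j ∈ Finset.Icc 1 n, (1 - (PowerSeries.X : PowerSeries (ZMod p)) ^ (1 * j)) with hB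
  have hmapprod : ∀ (k m : ℕ),
      PowerSeries.map φ (∏ j ∈ Finset.Icc 1 m, (1 - (PowerSeries.X : PowerSeries ℤ) ^ (k * j)))
        = ∏ j ∈ Finset.Icc 1 m, (1 - (PowerSeries.X : PowerSeries (ZMod p)) ^ (k * j)) := by
    intro k m
    rw [map_prod]
    refine Finset.prod_congr rfl fun j _ => ?_
    rw [map_sub, map_one, map_pow, PowerSeries.map_X]
  have hagree : ∀ i ≤ n, PowerSeries.coeff i (PowerSeries.map φ (f 1))
      = PowerSeries.coeff i B := by
    intro i hi
    rw [PowerSeries.coeff_map]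
    show φ (PowerSeries.coeff i (f 1)) = _
    rw [show PowerSeries.coeff i (f 1)
        = PowerSeries.coeff i
          (∏ j ∈ Finset.Icc 1 i, (1 - (PowerSeries.X : PowerSeries ℤ) ^ (1 * j))) from
      PowerSeries.coeff_mk _ _]
    rw [coeff_prod_stable (R := ZMod p) 1 le_rfl hi le_rfl, ← hmapprod,
      PowerSeries.coeff_map]
    exact congrArg φ (coeff_prod_stable (R := ℤ) 1 le_rfl le_rfl hi).symm
  have h1 : PowerSeries.coeff n ((PowerSeries.map φ (f 1)) ^ p)
      = PowerSeries.coeff n (B ^ p) :=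
    coeff_pow_congr hagree p n le_rfl
  haveI : CharP ((PowerSeries (ZMod p))) p := ⟨fun x => by
    rw [← map_natCast ((PowerSeries.C (R := (ZMod p)))) x]
    constructor
    · intro h
      have h2 := congrArg ((PowerSeries.constantCoeff (R := ZMod p))) h
      rw [PowerSeries.constantCoeff_C, map_zero] at h2
      exact (CharP.cast_eq_zero_iff (ZMod p) p x).mp h2
    · intro h
      rw [(CharP.cast_eq_zero_iff (ZMod p) p x).mpr h, map_zero]⟩
  have hBp : B ^ p = ∏ j ∈ Finset.Icc 1 n, (1 - (PowerSeries.X : PowerSeries (ZMod p)) ^ (p * j)) := by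
    rw [hB, ← Finset.prod_pow]
    refine Finset.prod_congr rfl fun j _ => ?_
    rw [sub_pow_char, one_pow, one_mul, ← pow_mul, mul_comm j p]
  have h2 : PowerSeries.coeff n (PowerSeries.map φ (f p))
      = PowerSeries.coeff n (B ^ p) := by
    rw [hBp, PowerSeries.coeff_map]
    show φ (PowerSeries.coeff n (f p)) = _
    rw [show PowerSeries.coeff n (f p)
        = PowerSeries.coeff n
          (∏ j ∈ Finset.Icc 1 n, (1 - (PowerSeries.X : PowerSeries ℤ) ^ (p * j))) from
      PowerSeries.coeff_mk _ _]
    rw [← hmapprod, PowerSeries.coeff_map]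
  rw [map_sub, h1, h2, sub_self]

theorem stmt0 (p j : ℕ) (hp : p.Prime) (hj : 1 ≤ j) :
    ∀ n : ℕ, ((p : ℤ) ^ j) ∣
      PowerSeries.coeff n (f 1 ^ p ^ j - f p ^ p ^ (j - 1)) := by
  intro n
  have hC : ((PowerSeries.C (R := ℤ)) (p : ℤ)) ∣ f 1 ^ p - f p :=
    C_dvd_of_forall_dvd (key_mod_p p hp)
  have hp' : ((p : ℕ) : PowerSeries ℤ) ∣ f 1 ^ p - f p := by
    rwa [show ((p : ℕ) : PowerSeries ℤ) = (PowerSeries.C (R := ℤ)) (p : ℤ) by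
      rw [← map_natCast ((PowerSeries.C (R := ℤ))) p]]
  have h := dvd_sub_pow_of_dvd_sub hp' (j - 1)
  rw [← pow_mul, ← pow_succ'] at h
  have hj1 : j - 1 + 1 = j := by omega
  rw [hj1] at h
  obtain ⟨g, hg⟩ := h
  rw [hg]
  have : ((p : ℕ) : PowerSeries ℤ) ^ j = (PowerSeries.C (R := ℤ)) ((p : ℤ) ^ j) := by
    rw [map_pow, ← map_natCast ((PowerSeries.C (R := ℤ))) p]
  rw [this, PowerSeries.coeff_C_mul]
  exact Dvd.intro _ rfl
end

section
/- The Jacobi triple product identity: for |ab|<1, f(a,b) := ∑_{n=-∞}^∞ a^(n(n+1)/2) b^(n(n-1)/2) equals (-a;ab)_∞ (-b;ab)_∞ (ab;ab)_∞. -/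
open Finset Filter Complex Topology

noncomputable section JTP

namespace JTP

/-- Gaussian binomial coefficient as a function of `q : ℂ`. -/
def G (q : ℂ) : ℕ → ℕ → ℂ
  | 0, 0 => 1
  | 0, _+1 => 0
  | _+1, 0 => 1
  | M+1, j+1 => G q M (j+1) + q ^ (M - j) * G q M j

lemma G_zero_right (q : ℂ) (M : ℕ) : G q M 0 = 1 := by cases M <;> rfl

lemma G_eq_zero (q : ℂ) : ∀ M j, M < j → G q M j = 0 := by
  intro M
  induction M with
  | zero => intro j hj; match j, hj with | j+1, _ => rfl
  | succ M ih =>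
    intro j hj
    match j, hj with
    | j+1, hj =>
      show G q M (j+1) + q ^ (M - j) * G q M j = 0
      rw [ih (j+1) (by omega), ih j (by omega)]
      ring

lemma two_dvd_mul_pred (m : ℕ) : 2 * (m * (m-1) / 2) = m * (m-1) :=
  Nat.mul_div_cancel' (Nat.even_mul_pred_self m).two_dvd

lemma tri_succ (i : ℕ) : (i+1) * i / 2 = i * (i-1) / 2 + i := by
  have h1 := two_dvd_mul_pred (i+1)
  have h2 := two_dvd_mul_pred i
  simp only [Nat.add_sub_cancel] at h1
  rcases i with _ | k
  · simp
  · have e1 : (k+1+1) * (k+1) = (k+1) * (k+1-1) + 2 * (k+1) := by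
      simp only [Nat.add_sub_cancel]; ring
    omega

/-- Gauss's q-binomial theorem (finite form). -/
lemma gauss (q x : ℂ) (M : ℕ) :
    ∏ k ∈ range M, (1 + x * q ^ k)
      = ∑ j ∈ range (M+1), q ^ (j * (j-1) / 2) * G q M j * x ^ j := by
  induction M with
  | zero => simp [G]
  | succ M ih =>
    rw [prod_range_succ, ih]
    have hsplit : ∑ j ∈ range (M+2), q ^ (j * (j-1) / 2) * G q (M+1) j * x ^ j
        = (∑ i ∈ range (M+1), q ^ ((i+1) * i / 2) * G q (M+1) (i+1) * x ^ (i+1))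
          + q ^ 0 * G q (M+1) 0 * x ^ 0 := Finset.sum_range_succ' _ (M+1)
    rw [hsplit]
    have key : ∀ i ∈ range (M+1),
        q ^ ((i+1) * i / 2) * G q (M+1) (i+1) * x ^ (i+1)
          = q ^ ((i+1) * i / 2) * G q M (i+1) * x ^ (i+1)
            + (q ^ (i * (i-1) / 2) * G q M i * x ^ i) * (x * q ^ M) := by
      intro i hi
      simp only [mem_range] at hi
      show q ^ ((i+1) * i / 2) * (G q M (i+1) + q ^ (M - i) * G q M i) * x ^ (i+1) = _
      have he : (i+1) * i / 2 + (M - i) = i * (i-1) / 2 + M := by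
        have := tri_succ i; omega
      have hpow : q ^ ((i+1) * i / 2) * q ^ (M - i) = q ^ (i * (i-1)/2) * q ^ M := by
        rw [← pow_add, ← pow_add, he]
      linear_combination (G q M i * x ^ (i+1)) * hpow
    rw [Finset.sum_congr rfl key, Finset.sum_add_distrib]
    have h := Finset.sum_range_succ' (fun j => q ^ (j * (j-1) / 2) * G q M j * x ^ j) (M+1)
    simp only [Nat.add_sub_cancel] at h
    rw [Finset.sum_range_succ, G_eq_zero q M (M+1) (by omega)] at h
    rw [← Finset.sum_mul]
    have h0 : G q (M+1) 0 = G q M 0 := by rw [G_zero_right, G_zero_right]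
    rw [h0]
    linear_combination h

/-- Partial products of `(1 - q^(k+1))`. -/
def D (q : ℂ) (m : ℕ) : ℂ := ∏ k ∈ range m, (1 - q ^ (k+1))

lemma D_succ (q : ℂ) (m : ℕ) : D q (m+1) = D q m * (1 - q ^ (m+1)) :=
  prod_range_succ _ _

lemma D_zero (q : ℂ) : D q 0 = 1 := by simp [D]

lemma G_mul_D (q : ℂ) : ∀ M j, j ≤ M → G q M j * D q j * D q (M - j) = D q M := by
  intro M
  induction M with
  | zero => intro j hj; interval_cases j; simp [G, D]
  | succ M ih =>
    intro j hj
    rcases j with _ | i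
    · simp only [G_zero_right, D_zero, Nat.sub_zero, one_mul, mul_one]
    rcases Nat.lt_or_ge i M with hi | hi
    · -- i + 1 ≤ M
      show (G q M (i+1) + q ^ (M - i) * G q M i) * D q (i+1) * D q (M + 1 - (i+1)) = _
      have hD1 : D q (M + 1 - (i+1)) = D q (M - (i+1)) * (1 - q ^ (M - i)) := by
        rw [show M + 1 - (i+1) = (M - (i+1)) + 1 by omega, D_succ,
          show M - (i+1) + 1 = M - i by omega]
      have hD2 : D q (i+1) = D q i * (1 - q ^ (i+1)) := D_succ q i
      have hD3 : D q (M - i) = D q (M - (i+1)) * (1 - q ^ (M - i)) := by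
        rw [show M - i = (M - (i+1)) + 1 by omega, D_succ,
          show M - (i+1) + 1 = M - i by omega]
      have e1 := ih (i+1) (by omega)
      have e2 := ih i (by omega)
      rw [hD2] at e1
      rw [hD3] at e2
      have hq : q ^ (M - i) * q ^ (i+1) = q ^ (M+1) := by
        rw [← pow_add]; congr 1; omega
      rw [hD1, hD2, D_succ]
      linear_combination (1 - q ^ (M - i)) * e1 + q ^ (M - i) * (1 - q ^ (i+1)) * e2
        - D q M * hq
    · -- j = i+1 with i ≥ M, so i = M
      have hiM : i = M := by omega
      subst hiM
      show (G q i (i+1) + q ^ (i - i) * G q i i) * D q (i+1) * D q (i + 1 - (i+1)) = _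
      rw [G_eq_zero q i (i+1) (by omega), Nat.sub_self, Nat.sub_self, D_zero, D_succ]
      have e2 := ih i le_rfl
      rw [Nat.sub_self, D_zero] at e2
      linear_combination (1 - q ^ (i+1)) * e2

def t (a b : ℂ) (n : ℤ) : ℂ := a ^ (n * (n + 1) / 2).toNat * b ^ (n * (n - 1) / 2).toNat

lemma two_mul_toNat_up (n : ℤ) : 2 * (((n * (n + 1) / 2).toNat : ℤ)) = n * (n + 1) := by
  have hnn : 0 ≤ n * (n + 1) := by
    rcases le_or_gt 0 n with h | h
    · exact mul_nonneg h (by linarith)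
    · have := mul_nonneg (by linarith : (0:ℤ) ≤ -n) (by linarith : (0:ℤ) ≤ -(n+1))
      nlinarith
  obtain ⟨c, hc⟩ := Int.even_mul_succ_self n
  rw [hc] at hnn ⊢
  omega

lemma two_mul_toNat_down (n : ℤ) : 2 * (((n * (n - 1) / 2).toNat : ℤ)) = n * (n - 1) := by
  have h := two_mul_toNat_up (n - 1)
  have e : (n - 1) * (n - 1 + 1) = n * (n - 1) := by ring
  rw [e] at h
  exact h

lemma sum_range_succ_id (N : ℕ) : ∑ i ∈ range N, (i + 1) = (N + 1) * N / 2 := by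
  induction N with
  | zero => simp
  | succ N ih =>
    rw [Finset.sum_range_succ, ih]
    have h := tri_succ (N + 1)
    simp only [Nat.add_sub_cancel] at h
    omega

lemma refl1 (a b : ℂ) (ha : a ≠ 0) (hb : b ≠ 0) (N : ℕ) :
    (∏ i ∈ range N, (1 + (a / (a*b) ^ N) * (a*b) ^ i)) * (a*b) ^ ((N+1) * N / 2)
      = a ^ N * ∏ k ∈ range N, (1 + b * (a*b) ^ k) := by
  set q : ℂ := a * b with hq
  have hq0 : q ≠ 0 := mul_ne_zero ha hb
  have hrefl := (Finset.prod_range_reflect (fun i => 1 + (a / q ^ N) * q ^ i) N).symm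
  rw [hrefl]
  have hpow : q ^ ((N+1) * N / 2) = ∏ i ∈ range N, q ^ (i+1) := by
    rw [Finset.prod_pow_eq_pow_sum, sum_range_succ_id]
  rw [hpow, ← Finset.prod_mul_distrib]
  have key : ∀ i ∈ range N,
      (1 + a / q ^ N * q ^ (N - 1 - i)) * q ^ (i+1) = a * (1 + b * q ^ i) := by
    intro i hi
    simp only [mem_range] at hi
    have h1 : q ^ (N - 1 - i) * q ^ (i+1) = q ^ N := by
      rw [← pow_add]; congr 1; omega
    have h2 : a / q ^ N * q ^ (N - 1 - i) * q ^ (i+1) = a := by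
      rw [mul_assoc, h1, div_mul_cancel₀ _ (pow_ne_zero N hq0)]
    have h3 : a * (b * q ^ i) = q ^ (i + 1) := by
      rw [pow_succ, hq]; ring
    calc (1 + a / q ^ N * q ^ (N - 1 - i)) * q ^ (i+1)
        = q ^ (i+1) + a / q ^ N * q ^ (N - 1 - i) * q ^ (i+1) := by ring
      _ = q ^ (i+1) + a := by rw [h2]
      _ = a * (1 + b * q ^ i) := by rw [mul_add, mul_one, h3]; ring
  rw [Finset.prod_congr rfl key, Finset.prod_mul_distrib, Finset.prod_const,
    Finset.card_range]

lemma castP (N : ℕ) : 2 * (((N+1) * N / 2 : ℕ) : ℤ) = ((N:ℤ)+1) * N := by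
  have h := two_dvd_mul_pred (N+1)
  simp only [Nat.add_sub_cancel] at h
  exact_mod_cast h

lemma castQ (j : ℕ) : 2 * ((j * (j-1) / 2 : ℕ) : ℤ) = (j:ℤ) * ((j:ℤ)-1) := by
  rcases j with _ | i
  · simp
  · have h := two_dvd_mul_pred (i+1)
    simp only [Nat.add_sub_cancel] at h
    calc 2 * ((((i+1) * i / 2 : ℕ)) : ℤ) = (((i+1)*i : ℕ) : ℤ) := by exact_mod_cast h
      _ = ((i:ℤ)+1) * (((i:ℤ)+1)-1) := by push_cast; ring

lemma exp_e1 (N j : ℕ) (hj : j ≤ 2*N) :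
    N + 2*(N*N) + (((j:ℤ) - N) * (((j:ℤ) - N) + 1) / 2).toNat
      = j + ((N+1) * N / 2 + j * (j-1) / 2 + N * (2*N - j)) := by
  have hA := two_mul_toNat_up ((j:ℤ) - N)
  have hP := castP N
  have hQ := castQ j
  have hR : ((N * (2*N - j) : ℕ) : ℤ) = (N:ℤ) * (2*(N:ℤ) - j) := by
    rw [Nat.cast_mul, Nat.cast_sub hj]; push_cast; ring
  have key : 2*((N:ℤ) + 2*(N*N) + ((((j:ℤ) - N) * (((j:ℤ) - N) + 1) / 2).toNat : ℤ))
      = 2*((j:ℤ) + (((N+1) * N / 2 : ℕ) : ℤ) + ((j * (j-1) / 2 : ℕ) : ℤ)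
          + ((N * (2*N - j) : ℕ) : ℤ)) := by
    linear_combination hA - hP - hQ - 2*hR
  have := key
  push_cast at this
  omega

lemma exp_e2 (N j : ℕ) (hj : j ≤ 2*N) :
    2*(N*N) + (((j:ℤ) - N) * (((j:ℤ) - N) - 1) / 2).toNat
      = (N+1) * N / 2 + j * (j-1) / 2 + N * (2*N - j) := by
  have hB := two_mul_toNat_down ((j:ℤ) - N)
  have hP := castP N
  have hQ := castQ j
  have hR : ((N * (2*N - j) : ℕ) : ℤ) = (N:ℤ) * (2*(N:ℤ) - j) := by
    rw [Nat.cast_mul, Nat.cast_sub hj]; push_cast; ring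
  have key : 2*(2*((N:ℤ)*N) + ((((j:ℤ) - N) * (((j:ℤ) - N) - 1) / 2).toNat : ℤ))
      = 2*((((N+1) * N / 2 : ℕ) : ℤ) + ((j * (j-1) / 2 : ℕ) : ℤ)
          + ((N * (2*N - j) : ℕ) : ℤ)) := by
    linear_combination hB - hP - hQ - 2*hR
  have := key
  push_cast at this
  omega

lemma pow_div_aux (x c : ℂ) (hx : x ≠ 0) (m M : ℕ) (h : m ≤ M) :
    x ^ M * (c / x) ^ m = c ^ m * x ^ (M - m) := by
  rw [show M = m + (M - m) by omega, pow_add, mul_comm (x ^ m), mul_assoc, ← mul_pow,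
    mul_comm x (c / x), div_mul_cancel₀ c hx, show m + (M-m) - m = M - m by omega]
  ring

/-- The finite Jacobi triple product identity. -/
lemma finite_jtp (a b : ℂ) (ha : a ≠ 0) (hb : b ≠ 0) (N : ℕ) :
    (∏ k ∈ range N, (1 + a * (a*b) ^ k)) * (∏ k ∈ range N, (1 + b * (a*b) ^ k))
      = ∑ j ∈ range (2*N+1), G (a*b) (2*N) j * t a b ((j:ℤ) - N) := by
  set q : ℂ := a * b with hq
  have hq0 : q ≠ 0 := mul_ne_zero ha hb
  set E : ℕ → ℕ := fun j => (N+1) * N / 2 + j * (j-1) / 2 + N * (2*N - j) with hE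
  -- Step 1 : product form of Gauss with x = a / q^N
  have h_gauss := gauss q (a / q ^ N) (2*N)
  have h_split : ∏ k ∈ range (2*N), (1 + (a / q ^ N) * q ^ k)
      = (∏ k ∈ range N, (1 + (a / q ^ N) * q ^ k))
        * (∏ k ∈ range N, (1 + (a / q ^ N) * q ^ (N + k))) := by
    rw [show 2*N = N + N by ring, Finset.prod_range_add]
  have hsecond : ∀ k ∈ range N, (1 + (a / q ^ N) * q ^ (N + k)) = 1 + a * q ^ k := by
    intro k _
    congr 1
    rw [pow_add, div_mul_eq_mul_div, mul_comm (q ^ N) (q ^ k), ← mul_assoc,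
      mul_div_assoc, div_self (pow_ne_zero N hq0), mul_one]
  rw [h_split, Finset.prod_congr rfl hsecond] at h_gauss
  -- Step 2 : the combined identity, multiplied by a^N * q^(2 N²)
  have hX : a ^ N * q ^ (2*(N*N)) * ((∏ k ∈ range N, (1 + a * q ^ k))
        * (∏ k ∈ range N, (1 + b * q ^ k)))
      = ∑ j ∈ range (2*N+1), G q (2*N) j * (a ^ j * q ^ (E j)) := by
    have hrefl := refl1 a b ha hb N
    calc a ^ N * q ^ (2*(N*N)) * ((∏ k ∈ range N, (1 + a * q ^ k))
          * (∏ k ∈ range N, (1 + b * q ^ k)))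
        = q ^ (2*(N*N)) * ((a ^ N * ∏ k ∈ range N, (1 + b * q ^ k))
            * ∏ k ∈ range N, (1 + a * q ^ k)) := by ring
      _ = q ^ (2*(N*N)) * q ^ ((N+1) * N / 2)
          * ((∏ k ∈ range N, (1 + (a / q ^ N) * q ^ k))
            * ∏ k ∈ range N, (1 + a * q ^ k)) := by rw [← hrefl]; ring
      _ = q ^ (2*(N*N)) * q ^ ((N+1) * N / 2)
          * ∑ j ∈ range (2*N+1), q ^ (j * (j-1) / 2) * G q (2*N) j * (a / q ^ N) ^ j := by
          rw [← h_gauss]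
      _ = ∑ j ∈ range (2*N+1), G q (2*N) j * (a ^ j * q ^ (E j)) := by
          rw [Finset.mul_sum]
          refine Finset.sum_congr rfl fun j hj => ?_
          simp only [mem_range] at hj
          have hjle : j ≤ 2*N := by omega
          have key : q ^ (2*(N*N)) * (a / q ^ N) ^ j = a ^ j * q ^ (N * (2*N - j)) := by
            rw [show 2*(N*N) = N * (2*N) by ring, pow_mul, pow_div_aux (q ^ N) a
              (pow_ne_zero N hq0) j (2*N) hjle, ← pow_mul]
          calc q ^ (2*(N*N)) * q ^ ((N+1) * N / 2)
                * (q ^ (j * (j-1) / 2) * G q (2*N) j * (a / q ^ N) ^ j)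
              = (q ^ (2*(N*N)) * (a / q ^ N) ^ j) * q ^ ((N+1) * N / 2)
                * q ^ (j * (j-1) / 2) * G q (2*N) j := by ring
            _ = a ^ j * q ^ (N * (2*N - j)) * q ^ ((N+1) * N / 2)
                * q ^ (j * (j-1) / 2) * G q (2*N) j := by rw [key]
            _ = G q (2*N) j * (a ^ j * q ^ (E j)) := by
                simp only [hE, pow_add]
                ring
  -- Step 3 : match terms with `t`
  have hterm : ∀ j ∈ range (2*N+1),
      G q (2*N) j * (a ^ j * q ^ (E j))
        = a ^ N * q ^ (2*(N*N)) * (G q (2*N) j * t a b ((j:ℤ) - N)) := by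
    intro j hj
    simp only [mem_range] at hj
    have hjle : j ≤ 2*N := by omega
    have h1 : a ^ N * q ^ (2*(N*N)) * t a b ((j:ℤ) - N)
        = a ^ (N + 2*(N*N) + (((j:ℤ) - N) * (((j:ℤ) - N) + 1) / 2).toNat)
          * b ^ (2*(N*N) + (((j:ℤ) - N) * (((j:ℤ) - N) - 1) / 2).toNat) := by
      simp only [t, hq, mul_pow, pow_add]
      ring
    have h2 : a ^ j * q ^ (E j) = a ^ (j + E j) * b ^ (E j) := by
      simp only [hq, mul_pow, pow_add]
      ring
    rw [h2]
    calc G q (2*N) j * (a ^ (j + E j) * b ^ (E j))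
        = G q (2*N) j * (a ^ (N + 2*(N*N) + (((j:ℤ) - N) * (((j:ℤ) - N) + 1) / 2).toNat)
            * b ^ (2*(N*N) + (((j:ℤ) - N) * (((j:ℤ) - N) - 1) / 2).toNat)) := by
          simp only [hE]
          rw [← exp_e1 N j hjle, ← exp_e2 N j hjle]
      _ = a ^ N * q ^ (2*(N*N)) * (G q (2*N) j * t a b ((j:ℤ) - N)) := by
          rw [← h1]; ring
  rw [Finset.sum_congr rfl hterm, ← Finset.mul_sum] at hX
  exact mul_left_cancel₀ (mul_ne_zero (pow_ne_zero N ha) (pow_ne_zero _ hq0)) hX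

lemma multipliable_one_add (u : ℕ → ℂ) (hu : Summable u) :
    Multipliable (fun k => 1 + u k) := by
  by_cases h : ∃ k, 1 + u k = 0
  · obtain ⟨k0, hk0⟩ := h
    refine ⟨0, ?_⟩
    have he : ∀ᶠ s : Finset ℕ in atTop, (0 : ℂ) = ∏ i ∈ s, (1 + u i) := by
      filter_upwards [eventually_ge_atTop ({k0} : Finset ℕ)] with s hs
      exact (Finset.prod_eq_zero (hs (Finset.mem_singleton_self k0)) hk0).symm
    exact Tendsto.congr' he tendsto_const_nhds
  · push_neg at h
    exact multipliable_one_add_of_summable hu.norm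

lemma summable_aux (c : ℂ) (r : ℝ) (h0 : 0 ≤ r) (h1 : r < 1) :
    Summable (fun m : ℕ => ‖c‖ ^ m * r ^ (m * (m-1) / 2)) := by
  obtain ⟨K, hK⟩ : ∃ K : ℕ, r ^ K < 1 / (‖c‖ + 1) := by
    apply exists_pow_lt_of_lt_one _ h1
    positivity
  have hlt : r ^ K * ‖c‖ < 1 := by
    have hc1 : (0:ℝ) < ‖c‖ + 1 := by positivity
    have h2 : r ^ K * (‖c‖ + 1) < 1 := (lt_div_iff₀ hc1).mp hK
    nlinarith [pow_nonneg h0 K, norm_nonneg c]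
  have hge : (0:ℝ) ≤ r ^ K * ‖c‖ := by positivity
  apply Summable.of_norm_bounded_eventually (g := fun m => (r ^ K * ‖c‖) ^ m)
    (summable_geometric_of_lt_one hge hlt)
  rw [Nat.cofinite_eq_atTop]
  filter_upwards [eventually_ge_atTop (2*K+1)] with m hm
  have hexp : K * m ≤ m * (m-1) / 2 := by
    have h2 : 2 * (m * (m-1) / 2) = m * (m-1) := Nat.mul_div_cancel'
      (Nat.even_mul_pred_self m).two_dvd
    have h3 : m * (2*K) ≤ m * (m-1) := Nat.mul_le_mul_left m (by omega)
    have h4 : m * (2*K) = 2*(K*m) := by ring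
    linarith
  have hb : r ^ (m * (m-1) / 2) ≤ r ^ (K * m) :=
    pow_le_pow_of_le_one h0 h1.le hexp
  have : ‖c‖ ^ m * r ^ (m * (m-1) / 2) ≤ (r ^ K * ‖c‖) ^ m := by
    rw [mul_pow, ← pow_mul]
    have := mul_le_mul_of_nonneg_left hb (pow_nonneg (norm_nonneg c) m)
    calc ‖c‖ ^ m * r ^ (m * (m-1) / 2) ≤ ‖c‖ ^ m * r ^ (K * m) := this
      _ = r ^ (K * m) * ‖c‖ ^ m := by ring
  rw [Real.norm_of_nonneg (by positivity)]
  exact this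

lemma aux_prod_ge (s : Finset ℕ) (x : ℕ → ℝ) (h0 : ∀ i, 0 ≤ x i) (h1 : ∀ i, x i ≤ 1) :
    1 - ∑ i ∈ s, x i ≤ ∏ i ∈ s, (1 - x i) := by
  classical
  induction s using Finset.cons_induction with
  | empty => simp
  | cons a s ha ih =>
    rw [Finset.prod_cons, Finset.sum_cons]
    have hs0 : 0 ≤ ∑ i ∈ s, x i := Finset.sum_nonneg fun i _ => h0 i
    have h1a : 0 ≤ 1 - x a := by linarith [h1 a]
    calc 1 - (x a + ∑ i ∈ s, x i)
        ≤ (1 - x a) * (1 - ∑ i ∈ s, x i) := by nlinarith [mul_nonneg (h0 a) hs0]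
      _ ≤ (1 - x a) * ∏ i ∈ s, (1 - x i) := mul_le_mul_of_nonneg_left ih h1a

lemma A_nat (m : ℕ) : ((m:ℤ) * ((m:ℤ)+1) / 2).toNat = m * (m-1) / 2 + m := by
  have h1 := two_mul_toNat_up (m:ℤ)
  have h2 := castQ m
  have e : (m:ℤ) * ((m:ℤ)+1) = (m:ℤ) * ((m:ℤ)-1) + 2*m := by ring
  have goal' : ((((m:ℤ) * ((m:ℤ)+1) / 2).toNat : ℕ) : ℤ) = ((m * (m-1)/2 + m : ℕ) : ℤ) := by
    rw [Nat.cast_add]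
    linarith
  exact Nat.cast_injective goal'

lemma B_nat (m : ℕ) : ((m:ℤ) * ((m:ℤ)-1) / 2).toNat = m * (m-1) / 2 := by
  have h1 := two_mul_toNat_down (m:ℤ)
  have h2 := castQ m
  have goal' : ((((m:ℤ) * ((m:ℤ)-1) / 2).toNat : ℕ) : ℤ) = ((m * (m-1)/2 : ℕ) : ℤ) := by
    linarith
  exact Nat.cast_injective goal'

lemma A_neg (m : ℕ) : ((-(m:ℤ)) * (-(m:ℤ)+1) / 2).toNat = m * (m-1) / 2 := by
  have h1 := two_mul_toNat_up (-(m:ℤ))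
  have h2 := castQ m
  have e : (-(m:ℤ)) * (-(m:ℤ)+1) = (m:ℤ) * ((m:ℤ)-1) := by ring
  have goal' : (((((-(m:ℤ))) * (-(m:ℤ)+1) / 2).toNat : ℕ) : ℤ) = ((m * (m-1)/2 : ℕ) : ℤ) := by
    linarith
  exact Nat.cast_injective goal'

lemma B_neg (m : ℕ) : ((-(m:ℤ)) * (-(m:ℤ)-1) / 2).toNat = m * (m-1) / 2 + m := by
  have h1 := two_mul_toNat_down (-(m:ℤ))
  have h2 := castQ m
  have e : (-(m:ℤ)) * (-(m:ℤ)-1) = (m:ℤ) * ((m:ℤ)-1) + 2*m := by ring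
  have goal' : (((((-(m:ℤ))) * (-(m:ℤ)-1) / 2).toNat : ℕ) : ℤ) = ((m * (m-1)/2 + m : ℕ) : ℤ) := by
    rw [Nat.cast_add]
    linarith
  exact Nat.cast_injective goal'

lemma summable_t (a b : ℂ) (h : ‖a * b‖ < 1) : Summable (t a b) := by
  have hr0 : (0:ℝ) ≤ ‖a‖ * ‖b‖ := by positivity
  have hr1 : ‖a‖ * ‖b‖ < 1 := by rwa [← norm_mul]
  apply Summable.of_norm
  apply Summable.of_nat_of_neg
  · apply Summable.congr (summable_aux a (‖a‖ * ‖b‖) hr0 hr1)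
    intro m
    simp only [t, norm_mul, norm_pow, A_nat, B_nat]
    rw [pow_add, mul_pow]
    ring
  · apply Summable.congr (summable_aux b (‖a‖ * ‖b‖) hr0 hr1)
    intro m
    simp only [t, norm_mul, norm_pow, A_neg, B_neg]
    rw [pow_add, mul_pow]
    ring

lemma geom_le (r : ℝ) (h0 : 0 ≤ r) (h1 : r < 1) (n : ℕ) :
    ∑ i ∈ range n, r ^ i ≤ 1 / (1 - r) := by
  rw [one_div]
  exact le_trans
    (Summable.sum_le_tsum (range n) (fun i _ => by positivity) (summable_geometric_of_lt_one h0 h1))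
    (le_of_eq (tsum_geometric_of_lt_one h0 h1))

lemma norm_D_le (q : ℂ) (hq : ‖q‖ < 1) (m : ℕ) :
    ‖D q m‖ ≤ Real.exp (1 / (1 - ‖q‖)) := by
  have hr0 : (0:ℝ) ≤ ‖q‖ := norm_nonneg q
  have hsum : ∑ k ∈ range m, ‖q‖ ^ (k+1) ≤ 1 / (1 - ‖q‖) := by
    calc ∑ k ∈ range m, ‖q‖ ^ (k+1) ≤ ∑ k ∈ range m, ‖q‖ ^ k :=
          Finset.sum_le_sum fun k _ => pow_le_pow_of_le_one hr0 hq.le (by omega)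
      _ ≤ 1 / (1 - ‖q‖) := geom_le _ hr0 hq m
  calc ‖D q m‖ = ∏ k ∈ range m, ‖1 - q ^ (k+1)‖ := by rw [D, norm_prod]
    _ ≤ ∏ k ∈ range m, (1 + ‖q‖ ^ (k+1)) := by
        refine Finset.prod_le_prod (fun k _ => norm_nonneg _) (fun k _ => ?_)
        calc ‖1 - q ^ (k+1)‖ ≤ ‖(1:ℂ)‖ + ‖q ^ (k+1)‖ := norm_sub_le _ _
          _ = 1 + ‖q‖ ^ (k+1) := by rw [norm_one, norm_pow]
    _ ≤ ∏ k ∈ range m, Real.exp (‖q‖ ^ (k+1)) := by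
        refine Finset.prod_le_prod (fun k _ => by positivity) (fun k _ => ?_)
        have := Real.add_one_le_exp (‖q‖ ^ (k+1))
        linarith
    _ = Real.exp (∑ k ∈ range m, ‖q‖ ^ (k+1)) := (Real.exp_sum _ _).symm
    _ ≤ _ := Real.exp_le_exp.mpr hsum

lemma exists_delta (q : ℂ) (hq : ‖q‖ < 1) :
    ∃ δ : ℝ, 0 < δ ∧ ∀ m, δ ≤ ∏ k ∈ range m, (1 - ‖q‖ ^ (k+1)) := by
  have hr0 : (0:ℝ) ≤ ‖q‖ := norm_nonneg q
  obtain ⟨K, hK⟩ := exists_pow_lt_of_lt_one (show (0:ℝ) < (1 - ‖q‖)/2 by linarith) hq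
  have hfac0 : ∀ k : ℕ, 0 ≤ 1 - ‖q‖ ^ (k+1) := fun k => by
    have : ‖q‖ ^ (k+1) ≤ 1 := pow_le_one₀ hr0 hq.le
    linarith
  have hfac1 : ∀ k : ℕ, 1 - ‖q‖ ^ (k+1) ≤ 1 := fun k => by
    have : (0:ℝ) ≤ ‖q‖ ^ (k+1) := by positivity
    linarith
  have hc0 : 0 < ∏ k ∈ range K, (1 - ‖q‖ ^ (k+1)) := by
    refine Finset.prod_pos fun k _ => ?_
    have : ‖q‖ ^ (k+1) < 1 := pow_lt_one₀ hr0 hq (by omega)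
    linarith
  refine ⟨(∏ k ∈ range K, (1 - ‖q‖ ^ (k+1))) / 2, by positivity, fun m => ?_⟩
  rcases le_or_gt m K with hmK | hmK
  · have hsub : ∏ k ∈ range K, (1 - ‖q‖ ^ (k+1)) ≤ ∏ k ∈ range m, (1 - ‖q‖ ^ (k+1)) := by
      have hsplit2 : (∏ k ∈ range m, (1 - ‖q‖ ^ (k+1))) * ∏ k ∈ Ico m K, (1 - ‖q‖ ^ (k+1))
          = ∏ k ∈ range K, (1 - ‖q‖ ^ (k+1)) := Finset.prod_range_mul_prod_Ico _ hmK
      have h1 : ∏ k ∈ Ico m K, (1 - ‖q‖ ^ (k+1)) ≤ 1 :=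
        Finset.prod_le_one (fun i _ => hfac0 i) (fun i _ => hfac1 i)
      have h2 : (0:ℝ) ≤ ∏ k ∈ range m, (1 - ‖q‖ ^ (k+1)) :=
        Finset.prod_nonneg fun i _ => hfac0 i
      nlinarith
    linarith
  · have hsplit : (∏ k ∈ range K, (1 - ‖q‖ ^ (k+1))) * ∏ k ∈ Ico K m, (1 - ‖q‖ ^ (k+1))
        = ∏ k ∈ range m, (1 - ‖q‖ ^ (k+1)) :=
      Finset.prod_range_mul_prod_Ico _ hmK.le
    have hsumIco : ∑ k ∈ Ico K m, ‖q‖ ^ (k+1) ≤ 1/2 := by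
      rw [Finset.sum_Ico_eq_sum_range]
      have he : ∀ i ∈ range (m - K), ‖q‖ ^ (K + i + 1) = ‖q‖ ^ (K+1) * ‖q‖ ^ i := by
        intro i _
        rw [← pow_add]
        congr 1
        omega
      rw [Finset.sum_congr rfl he, ← Finset.mul_sum]
      have hgeom := geom_le ‖q‖ hr0 hq (m - K)
      have hK1 : ‖q‖ ^ (K+1) ≤ (1 - ‖q‖)/2 := by
        calc ‖q‖ ^ (K+1) = ‖q‖ ^ K * ‖q‖ := pow_succ _ _
          _ ≤ ‖q‖ ^ K * 1 := by
              refine mul_le_mul_of_nonneg_left hq.le (by positivity)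
          _ ≤ (1 - ‖q‖)/2 := by rw [mul_one]; exact hK.le
      have h1r : (0:ℝ) < 1 - ‖q‖ := by linarith
      calc ‖q‖ ^ (K+1) * ∑ i ∈ range (m-K), ‖q‖ ^ i
          ≤ ((1 - ‖q‖)/2) * (1/(1 - ‖q‖)) := by
            refine mul_le_mul hK1 hgeom (Finset.sum_nonneg fun i _ => by positivity) (by linarith)
        _ = 1/2 := by
            rw [show (1-‖q‖)/2 * (1/(1-‖q‖)) = (1-‖q‖) * (1-‖q‖)⁻¹ / 2 by ring,
              mul_inv_cancel₀ (ne_of_gt h1r)]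
    have htail : 1/2 ≤ ∏ k ∈ Ico K m, (1 - ‖q‖ ^ (k+1)) := by
      have hb := aux_prod_ge (Ico K m) (fun k => ‖q‖ ^ (k+1))
        (fun i => by positivity) (fun i => pow_le_one₀ hr0 hq.le)
      linarith
    calc (∏ k ∈ range K, (1 - ‖q‖ ^ (k+1))) / 2
        = (∏ k ∈ range K, (1 - ‖q‖ ^ (k+1))) * (1/2) := by ring
      _ ≤ (∏ k ∈ range K, (1 - ‖q‖ ^ (k+1))) * ∏ k ∈ Ico K m, (1 - ‖q‖ ^ (k+1)) :=
          mul_le_mul_of_nonneg_left htail hc0.le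
      _ = ∏ k ∈ range m, (1 - ‖q‖ ^ (k+1)) := hsplit

lemma norm_D_ge (q : ℂ) (hq : ‖q‖ < 1) (m : ℕ) :
    ∏ k ∈ range m, (1 - ‖q‖ ^ (k+1)) ≤ ‖D q m‖ := by
  rw [D, norm_prod]
  refine Finset.prod_le_prod (fun k _ => ?_) (fun k _ => ?_)
  · have : ‖q‖ ^ (k+1) ≤ 1 := pow_le_one₀ (norm_nonneg q) hq.le
    linarith
  · calc (1:ℝ) - ‖q‖ ^ (k+1) = ‖(1:ℂ)‖ - ‖q ^ (k+1)‖ := by rw [norm_one, norm_pow]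
      _ ≤ ‖1 - q ^ (k+1)‖ := norm_sub_norm_le _ _

lemma D_ne_zero (q : ℂ) (hq : ‖q‖ < 1) (m : ℕ) : D q m ≠ 0 := by
  refine Finset.prod_ne_zero_iff.mpr fun k _ => ?_
  intro h
  have h2 : q ^ (k+1) = 1 := by
    have := sub_eq_zero.mp h
    exact this.symm
  have h3 : ‖q ^ (k+1)‖ < 1 := by
    rw [norm_pow]
    exact pow_lt_one₀ (norm_nonneg q) hq (by omega)
  rw [h2, norm_one] at h3
  exact lt_irrefl _ h3

lemma norm_G_le (q : ℂ) (hq : ‖q‖ < 1) (δ : ℝ) (hδ : 0 < δ)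
    (hlow : ∀ m, δ ≤ ‖D q m‖) (N j : ℕ) (hj : j ≤ 2*N) :
    ‖G q (2*N) j‖ ≤ Real.exp (1 / (1 - ‖q‖)) / (δ * δ) := by
  have h := G_mul_D q (2*N) j hj
  have hnorm : ‖G q (2*N) j‖ * ‖D q j‖ * ‖D q (2*N - j)‖ = ‖D q (2*N)‖ := by
    rw [← norm_mul, ← norm_mul, h]
  rw [le_div_iff₀ (by positivity)]
  have h1 := hlow j
  have h2 := hlow (2*N - j)
  have h3 := norm_D_le q hq (2*N)
  have s1 : ‖G q (2*N) j‖ * δ ≤ ‖G q (2*N) j‖ * ‖D q j‖ :=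
    mul_le_mul_of_nonneg_left h1 (norm_nonneg _)
  have s2 : ‖G q (2*N) j‖ * δ * δ ≤ ‖G q (2*N) j‖ * ‖D q j‖ * ‖D q (2*N - j)‖ :=
    mul_le_mul s1 h2 hδ.le (by positivity)
  calc ‖G q (2*N) j‖ * (δ * δ) = ‖G q (2*N) j‖ * δ * δ := by ring
    _ ≤ ‖G q (2*N) j‖ * ‖D q j‖ * ‖D q (2*N - j)‖ := s2
    _ = ‖D q (2*N)‖ := hnorm
    _ ≤ Real.exp (1 / (1 - ‖q‖)) := h3

lemma tendsto_GP (q : ℂ) (hq : ‖q‖ < 1) (P : ℂ) (hP : P ≠ 0)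
    (hDten : Filter.Tendsto (fun m => D q m) Filter.atTop (nhds P)) (n : ℤ) :
    Filter.Tendsto (fun N : ℕ => G q (2*N) ((n + N).toNat) * P) Filter.atTop (nhds 1) := by
  have h2N : Filter.Tendsto (fun N : ℕ => D q (2*N)) Filter.atTop (nhds P) := by
    refine hDten.comp (Filter.tendsto_atTop_atTop.mpr fun b => ⟨b, fun a ha => by omega⟩)
  have hf2 : Filter.Tendsto (fun N : ℕ => D q ((n + N).toNat)) Filter.atTop (nhds P) := by
    refine hDten.comp (Filter.tendsto_atTop_atTop.mpr fun b => ⟨b + n.natAbs, fun a ha => by omega⟩)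
  have hf3 : Filter.Tendsto (fun N : ℕ => D q (((N:ℤ) - n).toNat)) Filter.atTop (nhds P) := by
    refine hDten.comp (Filter.tendsto_atTop_atTop.mpr fun b => ⟨b + n.natAbs, fun a ha => by omega⟩)
  have hmain : Filter.Tendsto
      (fun N : ℕ => D q (2*N) * P / (D q ((n + N).toNat) * D q (((N:ℤ) - n).toNat)))
      Filter.atTop (nhds 1) := by
    have hnum : Filter.Tendsto (fun N : ℕ => D q (2*N) * P) Filter.atTop (nhds (P * P)) :=
      h2N.mul_const P
    have := hnum.div (hf2.mul hf3) (mul_ne_zero hP hP)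
    simpa [div_self (mul_ne_zero hP hP), Pi.div_def] using this
  refine Filter.Tendsto.congr' ?_ hmain
  filter_upwards [Filter.eventually_ge_atTop n.natAbs] with N hN
  have hj : (n + N).toNat ≤ 2*N := by omega
  have hsub : 2*N - (n + N).toNat = ((N:ℤ) - n).toNat := by omega
  have hgd := G_mul_D q (2*N) ((n + N).toNat) hj
  rw [hsub] at hgd
  rw [← hgd]
  field_simp [D_ne_zero q hq ((n+N).toNat), D_ne_zero q hq (((N:ℤ) - n).toNat)]

lemma main_case (a b : ℂ) (ha : a ≠ 0) (hb : b ≠ 0) (h : ‖a * b‖ < 1) :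
    ∑' n : ℤ, t a b n =
      (∏' k : ℕ, (1 + a * (a * b) ^ k)) * (∏' k : ℕ, (1 + b * (a * b) ^ k)) *
        ∏' k : ℕ, (1 - (a * b) ^ (k + 1)) := by
  set q : ℂ := a * b with hqdef
  have hq1 : ‖q‖ < 1 := h
  have hsumq : Summable (fun k : ℕ => q ^ k) := summable_geometric_of_norm_lt_one hq1
  have hma : Multipliable (fun k : ℕ => 1 + a * q ^ k) :=
    multipliable_one_add _ (hsumq.mul_left a)
  have hmb : Multipliable (fun k : ℕ => 1 + b * q ^ k) :=
    multipliable_one_add _ (hsumq.mul_left b)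
  have hmd : Multipliable (fun k : ℕ => 1 - q ^ (k+1)) := by
    have h1 : Summable (fun k : ℕ => -(q ^ (k+1))) :=
      ((hsumq.mul_left q).congr fun k => by rw [pow_succ]; ring).neg
    have h2 := multipliable_one_add _ h1
    refine h2.congr fun k => ?_
    ring
  set P : ℂ := ∏' k : ℕ, (1 - q ^ (k+1)) with hPdef
  have hDten : Filter.Tendsto (D q) Filter.atTop (nhds P) := Multipliable.tendsto_prod_tprod_nat hmd
  obtain ⟨δ, hδ, hδle⟩ := exists_delta q hq1
  have hlow : ∀ m, δ ≤ ‖D q m‖ := fun m => le_trans (hδle m) (norm_D_ge q hq1 m)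
  have hPnorm : δ ≤ ‖P‖ := ge_of_tendsto' hDten.norm hlow
  have hPne : P ≠ 0 := fun hz => by rw [hz, norm_zero] at hPnorm; linarith
  have hts : Summable (t a b) := summable_t a b h
  set C : ℝ := Real.exp (1 / (1 - ‖q‖)) / (δ * δ) * ‖P‖ with hC
  have hC0 : 0 ≤ C := by
    rw [hC]
    positivity
  set g : ℕ → ℤ → ℂ := fun N n =>
    if n.natAbs ≤ N then G q (2*N) ((n + N).toNat) * P * t a b n else 0 with hg
  have hlim : Filter.Tendsto (fun N => ∑' n : ℤ, g N n) Filter.atTop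
      (nhds (∑' n : ℤ, t a b n)) := by
    apply tendsto_tsum_of_dominated_convergence (bound := fun n : ℤ => C * ‖t a b n‖)
      (hts.norm.mul_left C)
    · intro n
      refine Filter.Tendsto.congr' ?_
        (by simpa using (tendsto_GP q hq1 P hPne hDten n).mul_const (t a b n))
      filter_upwards [Filter.eventually_ge_atTop n.natAbs] with N hN
      simp only [hg, if_pos hN]
    · apply Filter.Eventually.of_forall
      intro N n
      by_cases hn : n.natAbs ≤ N
      · simp only [hg, if_pos hn]
        have hGb := norm_G_le q hq1 δ hδ hlow N ((n + N).toNat) (by omega)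
        calc ‖G q (2*N) ((n + N).toNat) * P * t a b n‖
            = ‖G q (2*N) ((n + N).toNat)‖ * ‖P‖ * ‖t a b n‖ := by
              rw [norm_mul, norm_mul]
          _ ≤ Real.exp (1 / (1 - ‖q‖)) / (δ * δ) * ‖P‖ * ‖t a b n‖ := by
              have := mul_le_mul_of_nonneg_right hGb (norm_nonneg P)
              exact mul_le_mul_of_nonneg_right this (norm_nonneg _)
          _ = C * ‖t a b n‖ := by rw [hC]
      · simp only [hg, if_neg hn, norm_zero]
        positivity
  have heq : ∀ N, ∑' n : ℤ, g N n
      = ((∏ k ∈ range N, (1 + a * q ^ k)) * (∏ k ∈ range N, (1 + b * q ^ k))) * P := by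
    intro N
    rw [tsum_eq_sum (s := Finset.Icc (-(N:ℤ)) (N:ℤ))
      (fun n hn => by
        simp only [Finset.mem_Icc] at hn
        exact if_neg (by omega))]
    rw [finite_jtp a b ha hb N, Finset.sum_mul]
    refine Finset.sum_nbij' (i := fun n : ℤ => (n + N).toNat) (j := fun j : ℕ => (j:ℤ) - N)
      ?_ ?_ ?_ ?_ ?_
    · intro n hn
      simp only [Finset.mem_Icc] at hn
      simp only [Finset.mem_range]
      omega
    · intro j hj
      simp only [Finset.mem_range] at hj
      simp only [Finset.mem_Icc]
      omega
    · intro n hn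
      simp only [Finset.mem_Icc] at hn
      omega
    · intro j hj
      simp only [Finset.mem_range] at hj
      omega
    · intro n hn
      simp only [Finset.mem_Icc] at hn
      have h1 : ((((n + N).toNat : ℕ)):ℤ) - N = n := by omega
      simp only [hg]
      rw [if_pos (by omega : n.natAbs ≤ N), h1, ← hqdef]
      ring
  have hlim' : Filter.Tendsto
      (fun N => ((∏ k ∈ range N, (1 + a * q ^ k)) * (∏ k ∈ range N, (1 + b * q ^ k))) * P)
      Filter.atTop (nhds (∑' n : ℤ, t a b n)) := by
    refine Filter.Tendsto.congr (fun N => heq N) hlim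
  have hlim2 : Filter.Tendsto
      (fun N => ((∏ k ∈ range N, (1 + a * q ^ k)) * (∏ k ∈ range N, (1 + b * q ^ k))) * P)
      Filter.atTop
      (nhds ((∏' k : ℕ, (1 + a * q ^ k)) * (∏' k : ℕ, (1 + b * q ^ k)) * P)) :=
    ((Multipliable.tendsto_prod_tprod_nat hma).mul
      (Multipliable.tendsto_prod_tprod_nat hmb)).mul_const P
  exact tendsto_nhds_unique hlim' hlim2

end JTP

theorem stmt1 (a b : ℂ) (h : ‖a * b‖ < 1) :
    ∑' n : ℤ, a ^ (n * (n + 1) / 2).toNat * b ^ (n * (n - 1) / 2).toNat =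
      (∏' k : ℕ, (1 + a * (a * b) ^ k)) * (∏' k : ℕ, (1 + b * (a * b) ^ k)) *
        ∏' k : ℕ, (1 - (a * b) ^ (k + 1)) := by
  have h' : ‖a * b‖ < 1 := h
  by_cases ha : a = 0
  · subst ha
    simp only [zero_mul, mul_zero, add_zero]
    have h1 : ∏' k : ℕ, ((1:ℂ) + 0 * (0:ℂ) ^ k) = 1 := by
      simp
    have h3 : ∏' k : ℕ, ((1:ℂ) - (0:ℂ) ^ (k+1)) = 1 := by
      have he : ∀ k : ℕ, (1:ℂ) - (0:ℂ) ^ (k+1) = 1 := fun k => by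
        rw [zero_pow (Nat.succ_ne_zero k)]; ring
      simp only [he]
      exact tprod_one
    have h2 : ∏' k : ℕ, ((1:ℂ) + b * (0:ℂ) ^ k) = 1 + b := by
      rw [tprod_eq_mulSingle 0 ?_]
      · norm_num
      · intro k hk
        rw [zero_pow hk]; ring
    have hs : ∑' n : ℤ, (0:ℂ) ^ (n*(n+1)/2).toNat * b ^ (n*(n-1)/2).toNat = 1 + b := by
      rw [tsum_eq_sum (s := ({0, -1} : Finset ℤ)) ?_]
      · rw [Finset.sum_insert (by decide), Finset.sum_singleton]
        norm_num
      · intro n hn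
        simp only [Finset.mem_insert, Finset.mem_singleton] at hn
        push_neg at hn
        have hd := JTP.two_mul_toNat_up n
        have hne : (n*(n+1)/2).toNat ≠ 0 := by
          intro h0
          rw [h0] at hd
          simp only [Nat.cast_zero, mul_zero] at hd
          rcases mul_eq_zero.mp hd.symm with hx | hx
          · exact hn.1 hx
          · exact hn.2 (by omega)
        rw [zero_pow hne, zero_mul]
    rw [hs, h2, h3, tprod_one]
    ring
  by_cases hb : b = 0
  · subst hb
    simp only [mul_zero, zero_mul, add_zero]
    have h2 : ∏' k : ℕ, ((1:ℂ) + 0 * (0:ℂ) ^ k) = 1 := by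
      simp
    have h3 : ∏' k : ℕ, ((1:ℂ) - (0:ℂ) ^ (k+1)) = 1 := by
      have he : ∀ k : ℕ, (1:ℂ) - (0:ℂ) ^ (k+1) = 1 := fun k => by
        rw [zero_pow (Nat.succ_ne_zero k)]; ring
      simp only [he]
      exact tprod_one
    have h1 : ∏' k : ℕ, ((1:ℂ) + a * (0:ℂ) ^ k) = 1 + a := by
      rw [tprod_eq_mulSingle 0 ?_]
      · norm_num
      · intro k hk
        rw [zero_pow hk]; ring
    have hs : ∑' n : ℤ, a ^ (n*(n+1)/2).toNat * (0:ℂ) ^ (n*(n-1)/2).toNat = 1 + a := by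
      rw [tsum_eq_sum (s := ({0, 1} : Finset ℤ)) ?_]
      · rw [Finset.sum_insert (by decide), Finset.sum_singleton]
        norm_num
      · intro n hn
        simp only [Finset.mem_insert, Finset.mem_singleton] at hn
        push_neg at hn
        have hd := JTP.two_mul_toNat_down n
        have hne : (n*(n-1)/2).toNat ≠ 0 := by
          intro h0
          rw [h0] at hd
          simp only [Nat.cast_zero, mul_zero] at hd
          rcases mul_eq_zero.mp hd.symm with hx | hx
          · exact hn.1 hx
          · exact hn.2 (by omega)
        rw [zero_pow hne, mul_zero]
    rw [hs, h1, h3, tprod_one]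
    ring
  exact JTP.main_case a b ha hb h'
end JTP
end

section
/- As formal power series, φ(-q) := ∑_{n=-∞}^∞ (-1)^n q^(n^2) equals f_1^2 / f_2, i.e., ∑_{n∈ℤ} (-1)^n q^(n^2) = ∏_{k≥1} (1-q^k)^2 / ∏_{k≥1} (1-q^(2k)); equivalently (∑_{n∈ℤ} (-1)^n q^(n^2)) · ∏_{k≥1}(1-q^(2k)) = ∏_{k≥1}(1-q^k)^2. -/
open PowerSeries Finset Filter

-- `phi t` is the theta series φ(-q^t) = ∑_{n∈ℤ} (-1)^n q^(t·n²) = 1 + 2∑_{n≥1} (-1)^n q^(t·n²).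
open scoped Classical in
noncomputable def phi (t : ℕ) : PowerSeries ℤ :=
  PowerSeries.mk fun n =>
    if n = 0 then 1
    else if (∃ m : ℕ, t * m ^ 2 = n) then 2 * (-1) ^ Nat.sqrt (n / t) else 0

noncomputable section
namespace JTPaux

abbrev PS := PowerSeries ℤ

/-- Gaussian binomial coefficient `[n choose m]` in the variable `Q = X^2`. -/
def gb : ℕ → ℕ → PS
  | _, 0 => 1
  | 0, _+1 => 0
  | n+1, m+1 => X ^ (2*(m+1)) * gb n (m+1) + gb n m

lemma gb_zero (n : ℕ) : gb n 0 = 1 := by cases n <;> rfl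

lemma gb_succ (n m : ℕ) : gb (n+1) (m+1) = X ^ (2*(m+1)) * gb n (m+1) + gb n m := rfl

lemma gb_of_lt : ∀ {n m : ℕ}, n < m → gb n m = 0 := by
  intro n
  induction n with
  | zero => intro m h; match m, h with | m+1, _ => rfl
  | succ n ih =>
    intro m h
    match m, h with
    | m+1, h =>
      rw [gb_succ, ih (by omega), ih (by omega)]
      ring

lemma gb_self : ∀ n, gb n n = 1 := by
  intro n
  induction n with
  | zero => rfl
  | succ n ih => rw [gb_succ, ih, gb_of_lt (by omega)]; ring

lemma gb_one_succ (n : ℕ) : gb (n+1) 1 = X^2 * gb n 1 + 1 := by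
  have := gb_succ n 0
  simpa [gb_zero] using this

lemma gb_one_mul (n : ℕ) : (1 - X^2) * gb n 1 = 1 - X^(2*n) := by
  induction n with
  | zero => rw [gb_of_lt (by omega)]; simp
  | succ n ih =>
    have h1 := gb_one_succ n
    have e : (X:PS)^(2*(n+1)) = X^(2*n) * X^2 := by
      have h : 2*(n+1) = 2*n+2 := by omega
      rw [h, pow_add]
    linear_combination (1-(X:PS)^2) * h1 + (X:PS)^2 * ih + e

lemma pascal : ∀ n m, m ≤ n → gb (n+1) (m+1) = gb n (m+1) + X ^ (2*(n-m)) * gb n m := by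
  intro n
  induction n with
  | zero =>
    intro m h
    interval_cases m
    rw [gb_self, gb_of_lt (by omega), gb_zero]
    simp
  | succ n ih =>
    intro m _h
    match m with
    | 0 =>
      have h1 : gb (n+1+1) 1 = X^2 * gb (n+1) 1 + 1 := gb_one_succ (n+1)
      have h0 : gb (n+1) 0 = 1 := gb_zero _
      have g1 := gb_one_mul (n+1)
      have e0 : n+1-0 = n+1 := by omega
      rw [e0, h0]
      linear_combination h1 - g1
    | m+1 =>
      rcases Nat.lt_or_ge m n with hm | hm
      · have h1 : gb (n+2) (m+2) = X^(2*(m+2)) * gb (n+1) (m+2) + gb (n+1) (m+1) :=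
          gb_succ (n+1) (m+1)
        have h2 : gb (n+1) (m+2) = gb n (m+2) + X^(2*(n-(m+1))) * gb n (m+1) :=
          ih (m+1) hm
        have h3 : gb (n+1) (m+1) = gb n (m+1) + X^(2*(n-m)) * gb n m := ih m (by omega)
        have h4 : gb (n+1) (m+2) = X^(2*(m+2)) * gb n (m+2) + gb n (m+1) := gb_succ n (m+1)
        have h5 : gb (n+1) (m+1) = X^(2*(m+1)) * gb n (m+1) + gb n m := gb_succ n m
        have E1 : (X:PS)^(2*(m+2)) * X^(2*(n-(m+1))) = X^(2*(n+1)) := by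
          rw [← pow_add]
          congr 1
          omega
        have E2 : (X:PS)^(2*(n-m)) * X^(2*(m+1)) = X^(2*(n+1)) := by
          rw [← pow_add]
          congr 1
          omega
        have e0 : n+1-(m+1) = n-m := by omega
        rw [e0]
        linear_combination h1 + (X:PS)^(2*(m+2)) * h2 - h4 - (X:PS)^(2*(n-m)) * h5 + h3
          + gb n (m+1) * E1 - gb n (m+1) * E2
      · have hmn : m = n := by omega
        subst hmn
        rw [gb_self, gb_of_lt (by omega), gb_self]
        simp [Nat.sub_self]


def sd (m N : ℕ) : ℕ := (N - m)^2 + (m - N)^2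

lemma nat_of_int {a b : ℕ} (h : (a:ℤ) = (b:ℤ)) : a = b := by exact_mod_cast h

lemma sd_cast (m N : ℕ) : (sd m N : ℤ) = ((m:ℤ) - N)^2 := by
  rcases le_total m N with h | h
  · have h1 : m - N = 0 := by omega
    have h2 : ((N - m : ℕ) : ℤ) = (N:ℤ) - m := by omega
    rw [sd]; push_cast [h1, h2]; ring
  · have h1 : N - m = 0 := by omega
    have h2 : ((m - N : ℕ) : ℤ) = (m:ℤ) - N := by omega
    rw [sd]; push_cast [h1, h2]; ring

def t (N m : ℕ) : PS := (-1)^(m+N) * X^(sd m N) * gb (2*N) m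

def T (N : ℕ) : PS := ∑ m ∈ range (2*N+1), t N m

lemma gb_three (N m : ℕ) (h : m ≤ 2*N) :
    gb (2*N+2) (m+2) = X^(2*(m+2)) * gb (2*N) (m+2)
      + (1 + X^(2*(2*N+1))) * gb (2*N) (m+1) + X^(2*(2*N-m)) * gb (2*N) m := by
  have h1 : gb (2*N+2) (m+2) = gb (2*N+1) (m+2) + X^(2*(2*N+1-(m+1))) * gb (2*N+1) (m+1) :=
    pascal (2*N+1) (m+1) (by omega)
  have h2 : gb (2*N+1) (m+2) = X^(2*(m+2)) * gb (2*N) (m+2) + gb (2*N) (m+1) :=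
    gb_succ (2*N) (m+1)
  have h3 : gb (2*N+1) (m+1) = X^(2*(m+1)) * gb (2*N) (m+1) + gb (2*N) m :=
    gb_succ (2*N) m
  have e1 : 2*N+1-(m+1) = 2*N-m := by omega
  have E : (X:PS)^(2*(2*N-m)) * X^(2*(m+1)) = X^(2*(2*N+1)) := by
    rw [← pow_add]; congr 1; omega
  rw [e1] at h1
  linear_combination h1 + h2 + (X:PS)^(2*(2*N-m)) * h3 + gb (2*N) (m+1) * E

lemma tsplit (N m : ℕ) (h : m ≤ 2*N) :
    t (N+1) (m+2) = -(X^(2*N+1) * t N (m+2)) + (1 + X^(2*(2*N+1))) * t N (m+1)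
      - X^(2*N+1) * t N m := by
  unfold t
  have e2N : 2*(N+1) = 2*N+2 := by omega
  rw [e2N, gb_three N m h]
  -- sign normalization
  have s2 : ((-1:PS))^(m+2+(N+1)) = -(-1)^(m+N) := by
    have e : m+2+(N+1) = (m+N)+3 := by omega
    rw [e, pow_add]; ring
  have s1 : ((-1:PS))^(m+1+N) = -(-1)^(m+N) := by
    have e : m+1+N = (m+N)+1 := by omega
    rw [e, pow_add]; ring
  have s0 : ((-1:PS))^(m+2+N) = (-1)^(m+N) := by
    have e : m+2+N = (m+N)+2 := by omega
    rw [e, pow_add]; ring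
  -- exponent relations
  have Ea : (X:PS)^(sd (m+2) (N+1)) * X^(2*(m+2)) = X^(2*N+1) * X^(sd (m+2) N) := by
    rw [← pow_add, ← pow_add]
    apply congrArg
    apply nat_of_int
    push_cast [sd_cast]; ring
  have Eb : sd (m+2) (N+1) = sd (m+1) N := by
    apply nat_of_int
    rw [sd_cast, sd_cast]; push_cast; ring
  have Ec : (X:PS)^(sd (m+2) (N+1)) * X^(2*(2*N-m)) = X^(2*N+1) * X^(sd m N) := by
    rw [← pow_add, ← pow_add]
    apply congrArg
    apply nat_of_int
    have h2 : ((2*N - m : ℕ) : ℤ) = 2*(N:ℤ) - m := by omega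
    push_cast [sd_cast, h2]; ring
  rw [Eb] at Ea Ec ⊢
  rw [s2, s1, s0]
  linear_combination (-(((-1:PS))^(m+N)) * gb (2*N) (m+2)) * Ea
    + (-(((-1:PS))^(m+N)) * gb (2*N) m) * Ec

lemma t_big (N m : ℕ) (h : 2*N < m) : t N m = 0 := by
  unfold t; rw [gb_of_lt h]; ring

lemma sum_shift1 (N : ℕ) : ∑ m ∈ range (2*N+1), t N (m+1) = T N - t N 0 := by
  have h := sum_range_succ' (t N) (2*N+1)
  have h2 : ∑ m ∈ range (2*N+1+1), t N m = T N := by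
    rw [sum_range_succ, t_big N (2*N+1) (by omega), add_zero, T]
  linear_combination h2 - h

lemma sum_shift2 (N : ℕ) :
    ∑ m ∈ range (2*N+1), t N (m+2) = T N - t N 1 - t N 0 := by
  have ha := sum_range_succ' (fun k => t N (k+1)) (2*N+1)
  have hb := sum_range_succ' (t N) (2*N+2)
  have hc : ∑ m ∈ range (2*N+2+1), t N m = T N := by
    rw [sum_range_succ, sum_range_succ, t_big N (2*N+1) (by omega),
      t_big N (2*N+2) (by omega), add_zero, add_zero, T]
  linear_combination hc - hb - ha

lemma bdy (N : ℕ) : t (N+1) 1 + t (N+1) 0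
    = -(X^(2*N+1) * (t N 1 + t N 0)) + (1 + X^(2*(2*N+1))) * t N 0 := by
  unfold t
  have e2N : 2*(N+1) = 2*N+2 := by omega
  rw [e2N, gb_zero, gb_zero]
  have hg : gb (2*N+2) 1 = X^2 * (X^2 * gb (2*N) 1 + 1) + 1 := by
    rw [gb_one_succ, gb_one_succ]
  rw [hg]
  have R3 := gb_one_mul (2*N)
  have s1 : ((-1:PS))^(1+(N+1)) = (-1)^N := by
    have e : 1+(N+1) = N+2 := by omega
    rw [e, pow_add]; ring
  have s2 : ((-1:PS))^(0+(N+1)) = -(-1)^N := by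
    have e : 0+(N+1) = N+1 := by omega
    rw [e, pow_add]; ring
  have s3 : ((-1:PS))^(1+N) = -(-1)^N := by
    have e : 1+N = N+1 := by omega
    rw [e, pow_add]; ring
  rw [s1, s2, s3, Nat.zero_add]
  have E1 : sd 1 (N+1) = sd 0 N := by
    apply nat_of_int; rw [sd_cast, sd_cast]; push_cast; ring
  have E2 : (X:PS)^(sd 0 (N+1)) = X^(sd 0 N) * X^(2*N+1) := by
    rw [← pow_add]; apply congrArg; apply nat_of_int; push_cast [sd_cast]; ring
  have E3 : (X:PS)^(2*N+1) * X^(sd 1 N) = X^(sd 0 N) * X^2 := by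
    rw [← pow_add, ← pow_add]; apply congrArg; apply nat_of_int
    push_cast [sd_cast]; ring
  have E5 : (X:PS)^(2*(2*N)) * X^2 = X^(2*(2*N+1)) := by
    have e : 2*(2*N+1) = 2*(2*N)+2 := by omega
    rw [e, ← pow_add]
  rw [E1, E2]
  linear_combination (-(((-1:PS))^N) * gb (2*N) 1) * E3
    + (-(((-1:PS))^N) * X^(sd 0 N) * X^2) * R3 + (((-1:PS))^N * X^(sd 0 N)) * E5

lemma T_succ (N : ℕ) : T (N+1) = (1 - X^(2*N+1))^2 * T N := by
  have key : T (N+1) = ∑ m ∈ range (2*N+1), t (N+1) (m+2) + (t (N+1) 1 + t (N+1) 0) := by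
    have e : 2*(N+1)+1 = (2*N+1)+1+1 := by omega
    rw [T, e, sum_range_succ', sum_range_succ']
    ring
  rw [key, bdy]
  have hsum : ∑ m ∈ range (2*N+1), t (N+1) (m+2)
      = ∑ m ∈ range (2*N+1), (-(X^(2*N+1) * t N (m+2)) + (1 + X^(2*(2*N+1))) * t N (m+1)
          - X^(2*N+1) * t N m) :=
    Finset.sum_congr rfl (fun m hm => tsplit N m (by simp only [mem_range] at hm; omega))
  rw [hsum]
  rw [Finset.sum_sub_distrib, Finset.sum_add_distrib]
  simp only [← Finset.mul_sum, Finset.sum_neg_distrib]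
  rw [sum_shift1, sum_shift2, ← T]
  have E4 : (X:PS)^(2*N+1) * X^(2*N+1) = X^(2*(2*N+1)) := by
    have e : 2*(2*N+1) = (2*N+1)+(2*N+1) := by omega
    rw [e, ← pow_add]
  linear_combination (-(T N)) * E4

def A (N : ℕ) : PS := ∏ j ∈ Icc 1 N, (1 - X^j)
def Bp (N : ℕ) : PS := ∏ j ∈ Icc 1 N, (1 - X^(2*j))
def Cp (N : ℕ) : PS := ∏ j ∈ Icc 1 N, (1 - X^(2*j-1))

lemma Bp_zero : Bp 0 = 1 := by simp [Bp]

lemma Bp_succ (N : ℕ) : Bp (N+1) = Bp N * (1 - X^(2*(N+1))) :=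
  Finset.prod_Icc_succ_top (by omega) _

lemma T_eq (N : ℕ) : T N = Cp N ^ 2 := by
  induction N with
  | zero =>
    rw [T, Cp]
    simp [t, sd, gb_zero]
  | succ N ih =>
    have hC : Cp (N+1) = Cp N * (1 - X^(2*(N+1)-1)) := Finset.prod_Icc_succ_top (by omega) _
    have e : 2*(N+1)-1 = 2*N+1 := by omega
    rw [T_succ, ih, hC, e]; ring

lemma prod_Icc_split (f : ℕ → PS) {s n : ℕ} (h : s ≤ n) :
    (∏ j ∈ Icc 1 n, f j) = (∏ j ∈ Icc 1 s, f j) * ∏ j ∈ Icc (s+1) n, f j := by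
  induction n, h using Nat.le_induction with
  | base => rw [Finset.Icc_eq_empty (show ¬(s+1) ≤ s by omega), Finset.prod_empty, mul_one]
  | succ n hn ih =>
    rw [Finset.prod_Icc_succ_top (by omega), ih, Finset.prod_Icc_succ_top (by omega)]
    ring

lemma pf : ∀ n m, m ≤ n → gb n m * Bp m * Bp (n-m) = Bp n := by
  intro n
  induction n with
  | zero =>
    intro m h
    interval_cases m
    rw [gb_zero, Bp_zero]; ring
  | succ n ih =>
    intro m h
    match m with
    | 0 => rw [gb_zero, Bp_zero]; simp
    | m+1 =>
      rcases Nat.lt_or_ge m n with hm | hm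
      · have h5 : gb (n+1) (m+1) = X^(2*(m+1)) * gb n (m+1) + gb n m := gb_succ n m
        have IH1 : gb n (m+1) * Bp (m+1) * Bp (n-(m+1)) = Bp n := ih (m+1) hm
        have IH2 : gb n m * Bp m * Bp (n-m) = Bp n := ih m (by omega)
        have e1 : n - m = (n-(m+1))+1 := by omega
        have bd1 : Bp (n-m) = Bp (n-(m+1)) * (1 - X^(2*(n-m))) := by
          rw [e1, Bp_succ, ← e1]
        have bd2 : Bp (m+1) = Bp m * (1 - X^(2*(m+1))) := Bp_succ m
        have E : (X:PS)^(2*(m+1)) * X^(2*(n-m)) = X^(2*(n+1)) := by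
          rw [← pow_add]; congr 1; omega
        have e2 : n+1-(m+1) = n-m := by omega
        rw [e2, Bp_succ n]
        linear_combination (Bp (m+1) * Bp (n-m)) * h5
          + (X^(2*(m+1)) * (1 - X^(2*(n-m)))) * IH1
          + (1 - X^(2*(m+1))) * IH2
          + (X^(2*(m+1)) * gb n (m+1) * Bp (m+1)) * bd1
          + (gb n m * Bp (n-m)) * bd2
          - Bp n * E
      · have hmn : m = n := by omega
        subst hmn
        rw [gb_self, Nat.sub_self, Bp_zero]; ring

lemma Bp_ne_zero (N : ℕ) : Bp N ≠ 0 := by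
  intro h0
  have h1 : (constantCoeff (R := ℤ)) (Bp N) = 1 := by
    rw [Bp, map_prod]
    apply Finset.prod_eq_one
    intro j hj
    simp only [mem_Icc] at hj
    have h2 : 2*j ≠ 0 := by omega
    simp [map_pow, zero_pow h2]
  rw [h0] at h1
  simp at h1

lemma gb_mul_Bp_left (n m : ℕ) (h : m ≤ n) :
    gb n m * Bp (n-m) = ∏ j ∈ Icc (m+1) n, (1 - X^(2*j)) := by
  have h1 := pf n m h
  have h2 : Bp n = Bp m * ∏ j ∈ Icc (m+1) n, (1 - X^(2*j)) := prod_Icc_split _ h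
  apply mul_left_cancel₀ (Bp_ne_zero m)
  linear_combination h1 + h2

lemma gb_mul_Bp_right (n m : ℕ) (h : m ≤ n) :
    gb n m * Bp m = ∏ j ∈ Icc (n-m+1) n, (1 - X^(2*j)) := by
  have h1 := pf n m h
  have h2 : Bp n = Bp (n-m) * ∏ j ∈ Icc (n-m+1) n, (1 - X^(2*j)) :=
    prod_Icc_split _ (by omega)
  apply mul_left_cancel₀ (Bp_ne_zero (n-m))
  linear_combination h1 + h2

lemma prod_one_sub_dvd (K : ℕ) (s : Finset ℕ) (e : ℕ → ℕ) (h : ∀ j ∈ s, K ≤ e j) :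
    (X:PS)^K ∣ (∏ j ∈ s, (1 - X^(e j))) - 1 := by
  induction s using Finset.cons_induction with
  | empty => simp
  | cons a s ha ih =>
    rw [Finset.prod_cons]
    have key : ((1:PS) - X^(e a)) * (∏ j ∈ s, ((1:PS) - X^(e j))) - 1
        = ((1:PS) - X^(e a)) * ((∏ j ∈ s, ((1:PS) - X^(e j))) - 1) - X^(e a) := by ring
    rw [key]
    apply dvd_sub
    · exact Dvd.dvd.mul_left (ih (fun j hj => h j (Finset.mem_cons_of_mem hj))) _
    · exact pow_dvd_pow X (h a (Finset.mem_cons_self a s))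

lemma mul_sub_one_dvd {K : ℕ} {a b : PS} (ha : (X:PS)^K ∣ a - 1) (hb : (X:PS)^K ∣ b - 1) :
    (X:PS)^K ∣ a*b - 1 := by
  have key : a*b - 1 = a*(b-1) + (a-1) := by ring
  rw [key]
  exact dvd_add (Dvd.dvd.mul_left hb a) ha

lemma main_cong (N m : ℕ) (h : m ≤ 2*N) :
    (X:PS)^(2*N+1) ∣ X^(sd m N) * (gb (2*N) m * Bp N - 1) := by
  rcases le_total m N with hm | hm
  · have key : gb (2*N) m * Bp N
        = (∏ j ∈ Icc (2*N-m+1) (2*N), ((1:PS) - X^(2*j)))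
          * ∏ j ∈ Icc (m+1) N, ((1:PS) - X^(2*j)) := by
      have hsplit : Bp N = Bp m * ∏ j ∈ Icc (m+1) N, ((1:PS) - X^(2*j)) :=
        prod_Icc_split _ hm
      rw [hsplit, ← mul_assoc, gb_mul_Bp_right (2*N) m h]
    have d1 : (X:PS)^(2*m+2) ∣ gb (2*N) m * Bp N - 1 := by
      rw [key]
      apply mul_sub_one_dvd
      · exact prod_one_sub_dvd _ _ _ (fun j hj => by simp only [mem_Icc] at hj; omega)
      · exact prod_one_sub_dvd _ _ _ (fun j hj => by simp only [mem_Icc] at hj; omega)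
    obtain ⟨c, hc⟩ := d1
    rw [hc, ← mul_assoc, ← pow_add]
    have hineq : 2*N+1 ≤ sd m N + (2*m+2) := by
      have h2 : (2*(N:ℤ)+1) ≤ (sd m N : ℤ) + (2*(m:ℤ)+2) := by
        rw [sd_cast]
        nlinarith [sq_nonneg ((m:ℤ) - (N:ℤ) + 1)]
      exact_mod_cast h2
    exact Dvd.dvd.mul_right (pow_dvd_pow X hineq) c
  · have key : gb (2*N) m * Bp N
        = (∏ j ∈ Icc (m+1) (2*N), ((1:PS) - X^(2*j)))
          * ∏ j ∈ Icc (2*N-m+1) N, ((1:PS) - X^(2*j)) := by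
      have hsplit : Bp N = Bp (2*N-m) * ∏ j ∈ Icc (2*N-m+1) N, ((1:PS) - X^(2*j)) :=
        prod_Icc_split _ (by omega)
      rw [hsplit, ← mul_assoc]
      have := gb_mul_Bp_left (2*N) m h
      rw [show 2*N - m = 2*N - m from rfl] at this
      rw [this]
    have d1 : (X:PS)^(2*(2*N-m)+2) ∣ gb (2*N) m * Bp N - 1 := by
      rw [key]
      apply mul_sub_one_dvd
      · exact prod_one_sub_dvd _ _ _ (fun j hj => by simp only [mem_Icc] at hj; omega)
      · exact prod_one_sub_dvd _ _ _ (fun j hj => by simp only [mem_Icc] at hj; omega)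
    obtain ⟨c, hc⟩ := d1
    rw [hc, ← mul_assoc, ← pow_add]
    have hineq : 2*N+1 ≤ sd m N + (2*(2*N-m)+2) := by
      have e : ((2*N - m : ℕ):ℤ) = 2*(N:ℤ) - m := by omega
      have h2 : (2*(N:ℤ)+1) ≤ (sd m N : ℤ) + (2*(2*(N:ℤ)-m)+2) := by
        rw [sd_cast]
        nlinarith [sq_nonneg ((m:ℤ) - (N:ℤ) - 1)]
      have h3 : ((sd m N + (2*(2*N-m)+2) : ℕ) : ℤ) = (sd m N : ℤ) + (2*(2*(N:ℤ)-m)+2) := by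
        push_cast [e]; ring
      omega
    exact Dvd.dvd.mul_right (pow_dvd_pow X hineq) c

def S (N : ℕ) : PS := ∑ m ∈ range (2*N+1), (-1)^(m+N) * X^(sd m N)

lemma TB_cong (N : ℕ) : (X:PS)^(2*N+1) ∣ T N * Bp N - S N := by
  rw [T, Finset.sum_mul, S, ← Finset.sum_sub_distrib]
  apply Finset.dvd_sum
  intro m hm
  simp only [mem_range] at hm
  have key : t N m * Bp N - (-1)^(m+N) * X^(sd m N)
      = (-1)^(m+N) * (X^(sd m N) * (gb (2*N) m * Bp N - 1)) := by
    unfold t; ring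
  rw [key]
  exact Dvd.dvd.mul_left (main_cong N m (by omega)) _

lemma S_closed (N : ℕ) : S N = 1 + ∑ k ∈ Icc 1 N, (2:PS) * (-1)^k * X^(k^2) := by
  induction N with
  | zero => simp [S, sd]
  | succ N ih =>
    have key : S (N+1) = (∑ m ∈ range (2*N+1), ((-1:PS))^(m+1+(N+1)) * X^(sd (m+1) (N+1)))
        + (-1)^(0+(N+1)) * X^(sd 0 (N+1))
        + (-1)^((2*N+1+1)+(N+1)) * X^(sd (2*N+1+1) (N+1)) := by
      rw [S]
      have e : 2*(N+1)+1 = ((2*N+1)+1)+1 := by omega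
      rw [e, sum_range_succ, sum_range_succ']
    have s_mid : ∀ m : ℕ, ((-1:PS))^(m+1+(N+1)) = (-1)^(m+N) := by
      intro m
      have e : m+1+(N+1) = (m+N)+2 := by omega
      rw [e, pow_add]; ring
    have e_mid : ∀ m : ℕ, sd (m+1) (N+1) = sd m N := by
      intro m
      apply nat_of_int; rw [sd_cast, sd_cast]; push_cast; ring
    have s_bot : ((-1:PS))^(0+(N+1)) = -(-1)^N := by
      have e : 0+(N+1) = N+1 := by omega
      rw [e, pow_add]; ring
    have s_top : ((-1:PS))^((2*N+1+1)+(N+1)) = -(-1)^N := by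
      have e : (2*N+1+1)+(N+1) = (N+1) + 2*(N+1) := by omega
      rw [e, pow_add, pow_mul, pow_add]; norm_num
    have e_bot : sd 0 (N+1) = (N+1)^2 := by
      apply nat_of_int; rw [sd_cast]; push_cast; ring
    have e_top : sd (2*N+1+1) (N+1) = (N+1)^2 := by
      apply nat_of_int; rw [sd_cast]; push_cast; ring
    have hmid : ∑ m ∈ range (2*N+1), ((-1:PS))^(m+1+(N+1)) * X^(sd (m+1) (N+1)) = S N := by
      rw [S]
      apply Finset.sum_congr rfl
      intro m _
      rw [s_mid, e_mid]
    rw [key, hmid, s_bot, s_top, e_bot, e_top, ih,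
      Finset.sum_Icc_succ_top (show 1 ≤ N+1 by omega), pow_succ]
    ring

lemma phi_cong (N : ℕ) : (X:PS)^(N+1) ∣ phi 1 - S N := by
  rw [X_pow_dvd_iff]
  intro n hn
  rw [map_sub, sub_eq_zero, S_closed, map_add, map_sum]
  have hterm : ∀ k : ℕ, (coeff n) ((2:PS) * (-1)^k * X^(k^2))
      = (2*(-1)^k : ℤ) * (if n = k^2 then 1 else 0) := by
    intro k
    have h1 : ((2:PS) * (-1)^k) = C (2*(-1)^k : ℤ) := by
      rw [map_mul, map_pow, map_neg, map_one, map_ofNat]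
    rw [h1, coeff_C_mul, coeff_X_pow]
  simp only [hterm]
  unfold phi
  rw [coeff_mk]
  by_cases h0 : n = 0
  · subst h0
    rw [if_pos rfl, coeff_one, if_pos rfl]
    rw [Finset.sum_eq_zero]
    · ring
    · intro k hk
      simp only [mem_Icc] at hk
      rw [if_neg (by intro he; have := pow_pos (show 0 < k by omega) 2; omega), mul_zero]
  · rw [if_neg h0, coeff_one, if_neg h0, zero_add]
    by_cases hsq : ∃ m : ℕ, 1 * m^2 = n
    · obtain ⟨m, hm⟩ := hsq
      rw [one_mul] at hm
      rw [if_pos (⟨m, by rw [one_mul, hm]⟩ : ∃ m : ℕ, 1 * m^2 = n)]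
      have hs : Nat.sqrt (n / 1) = m := by
        rw [Nat.div_one, ← hm, pow_two, Nat.sqrt_eq]
      rw [hs]
      have hm0 : m ≠ 0 := by
        intro hz; apply h0; rw [← hm, hz]; simp
      have hm1 : 1 ≤ m := by omega
      have hmN : m ≤ N := by
        have h2 : m ≤ m^2 := Nat.le_self_pow (by omega) m
        omega
      rw [Finset.sum_eq_single m]
      · rw [if_pos hm.symm, mul_one]
      · intro k _ hkm
        rw [if_neg, mul_zero]
        intro he
        exact hkm (Nat.pow_left_injective (by norm_num) (by omega : k^2 = m^2))
      · intro hmem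
        exact absurd (Finset.mem_Icc.mpr ⟨hm1, hmN⟩) hmem
    · rw [if_neg hsq]
      symm
      apply Finset.sum_eq_zero
      intro k _
      rw [if_neg, mul_zero]
      intro he
      exact hsq ⟨k, by rw [one_mul, ← he]⟩

lemma f_cong (k N : ℕ) (hk : 0 < k) : (X:PS)^(N+1) ∣ f k - ∏ j ∈ Icc 1 N, ((1:PS) - X^(k*j)) := by
  rw [X_pow_dvd_iff]
  intro n hn
  rw [map_sub, sub_eq_zero]
  unfold f
  rw [coeff_mk]
  have hsplit : (∏ j ∈ Icc 1 N, ((1:PS) - X^(k*j)))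
      = (∏ j ∈ Icc 1 n, ((1:PS) - X^(k*j))) * ∏ j ∈ Icc (n+1) N, ((1:PS) - X^(k*j)) :=
    prod_Icc_split _ (by omega)
  have hd : (X:PS)^(n+1) ∣ (∏ j ∈ Icc (n+1) N, ((1:PS) - X^(k*j))) - 1 := by
    apply prod_one_sub_dvd
    intro j hj
    simp only [mem_Icc] at hj
    have h2 : j ≤ k*j := Nat.le_mul_of_pos_left j hk
    omega
  obtain ⟨c, hc⟩ := hd
  have key : (∏ j ∈ Icc 1 N, ((1:PS) - X^(k*j)))
      = (∏ j ∈ Icc 1 n, ((1:PS) - X^(k*j)))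
        + X^(n+1) * (c * ∏ j ∈ Icc 1 n, ((1:PS) - X^(k*j))) := by
    rw [hsplit]
    linear_combination (∏ j ∈ Icc 1 n, ((1:PS) - X^(k*j))) * hc
  rw [key, map_add]
  have hz : (coeff n) ((X:PS)^(n+1) * (c * ∏ j ∈ Icc 1 n, ((1:PS) - X^(k*j)))) = 0 :=
    X_pow_dvd_iff.mp (Dvd.intro _ rfl) n (by omega)
  rw [hz, add_zero]

lemma A_split (N : ℕ) : A (2*N) = Bp N * Cp N := by
  induction N with
  | zero => simp [A, Bp, Cp]
  | succ N ih =>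
    have e1 : 2*(N+1) = (2*N+1)+1 := by omega
    have hA1 : A ((2*N+1)+1) = A (2*N+1) * (1 - X^((2*N+1)+1)) :=
      Finset.prod_Icc_succ_top (by omega) _
    have hA2 : A (2*N+1) = A (2*N) * (1 - X^(2*N+1)) :=
      Finset.prod_Icc_succ_top (by omega) _
    have hB : Bp (N+1) = Bp N * (1 - X^(2*(N+1))) := Bp_succ N
    have hC : Cp (N+1) = Cp N * (1 - X^(2*(N+1)-1)) := Finset.prod_Icc_succ_top (by omega) _
    have e2 : 2*(N+1)-1 = 2*N+1 := by omega
    have e3 : 2*(N+1) = 2*N+1+1 := by omega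
    rw [e1, hA1, hA2, ih, hB, hC, e2, e3]
    ring

theorem stmt2_aux : phi 1 * f 2 = f 1 ^ 2 := by
  apply PowerSeries.ext
  intro n
  have h1 : (X:PS)^(n+1) ∣ phi 1 - S n := phi_cong n
  have h2 : (X:PS)^(n+1) ∣ f 2 - Bp n := f_cong 2 n (by omega)
  have h3 : (X:PS)^(n+1) ∣ T n * Bp n - S n :=
    dvd_trans (pow_dvd_pow X (by omega)) (TB_cong n)
  have h4 : (X:PS)^(n+1) ∣ f 1 - A (2*n) := by
    have h5 := f_cong 1 (2*n) (by omega)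
    have e : (∏ j ∈ Icc 1 (2*n), ((1:PS) - X^(1*j))) = A (2*n) := by
      unfold A
      apply Finset.prod_congr rfl
      intro j _
      rw [one_mul]
    rw [e] at h5
    exact dvd_trans (pow_dvd_pow X (by omega)) h5
  have hT : T n * Bp n * Bp n = A (2*n)^2 := by
    rw [T_eq, A_split]; ring
  have key : (X:PS)^(n+1) ∣ phi 1 * f 2 - f 1^2 := by
    have e : phi 1 * f 2 - f 1^2
        = ((phi 1 - S n) * f 2 + S n * (f 2 - Bp n)
          - (T n * Bp n - S n) * Bp n - (f 1 - A (2*n)) * (f 1 + A (2*n)))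
          + (T n * Bp n * Bp n - A (2*n)^2) := by ring
    rw [e, hT, sub_self, add_zero]
    exact dvd_sub (dvd_sub (dvd_add (h1.mul_right _) (h2.mul_left _)) (h3.mul_right _))
      (h4.mul_right _)
  have hc := X_pow_dvd_iff.mp key n (by omega)
  rw [map_sub, sub_eq_zero] at hc
  exact hc

end JTPaux
end

theorem stmt2 : phi 1 * f 2 = f 1 ^ 2 := JTPaux.stmt2_aux
end

section
/- Euler's pentagonal number theorem in Ramanujan's notation: ∑_{n=-∞}^∞ (-1)^n q^(n(3n-1)/2) = ∏_{k=1}^∞ (1-q^k), as formal power series over ℤ. -/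
open PowerSeries Finset Filter

namespace PentAux

/-- the set of partitions of `N` into distinct parts, as finsets -/
def E (N : ℕ) : Finset (Finset ℕ) :=
  (Finset.Icc 1 N).powerset.filter (fun S => S.sum id = N)

def MX (t : Finset ℕ) : ℕ := WithBot.unbotD 0 t.max
def mn (t : Finset ℕ) : ℕ := WithTop.untopD 0 t.min
def bt (t : Finset ℕ) : ℕ :=
  WithTop.untopD 0 ((t.filter fun a => Finset.Icc a (MX t) ⊆ t)).min

def pent (t : Finset ℕ) : Prop :=
  1 ≤ t.card ∧ (t = Finset.Icc t.card (2*t.card - 1) ∨ t = Finset.Icc (t.card+1) (2*t.card))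

instance : DecidablePred pent := fun t => by unfold pent; infer_instance

/-- Franklin's involution -/
def Φ (t : Finset ℕ) : Finset ℕ :=
  if mn t + bt t ≤ MX t + 1 then
    insert (MX t + 1) ((t.erase (mn t)).erase (MX t + 1 - mn t))
  else
    insert (MX t + 1 - bt t) (insert (bt t - 1) (t.erase (MX t)))

section basic
variable {t : Finset ℕ} {x : ℕ}

lemma MX_mem (h : t.Nonempty) : MX t ∈ t := by
  have := Finset.coe_max' h
  rw [MX, ← this, WithBot.unbotD_coe]
  exact Finset.max'_mem t h

lemma le_MX (hx : x ∈ t) : x ≤ MX t := by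
  have h : t.Nonempty := ⟨x, hx⟩
  have := Finset.coe_max' h
  rw [MX, ← this, WithBot.unbotD_coe]
  exact Finset.le_max' t x hx

lemma mn_mem (h : t.Nonempty) : mn t ∈ t := by
  have := Finset.coe_min' h
  rw [mn, ← this, WithTop.untopD_coe]
  exact Finset.min'_mem t h

lemma mn_le (hx : x ∈ t) : mn t ≤ x := by
  have h : t.Nonempty := ⟨x, hx⟩
  have := Finset.coe_min' h
  rw [mn, ← this, WithTop.untopD_coe]
  exact Finset.min'_le t x hx

lemma MX_filter_mem (h : t.Nonempty) :
    MX t ∈ t.filter fun a => Finset.Icc a (MX t) ⊆ t := by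
  simp only [Finset.mem_filter, MX_mem h, true_and, Finset.Icc_self,
    Finset.singleton_subset_iff, MX_mem h]

lemma bt_mem (h : t.Nonempty) : bt t ∈ t := by
  have h2 := mn_mem (t := t.filter fun a => Finset.Icc a (MX t) ⊆ t) ⟨_, MX_filter_mem h⟩
  rw [Finset.mem_filter] at h2
  exact h2.1

lemma bt_Icc_subset (h : t.Nonempty) : Finset.Icc (bt t) (MX t) ⊆ t := by
  have h2 := mn_mem (t := t.filter fun a => Finset.Icc a (MX t) ⊆ t) ⟨_, MX_filter_mem h⟩
  rw [Finset.mem_filter] at h2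
  exact h2.2

lemma bt_min (hx : x ∈ t) (hIcc : Finset.Icc x (MX t) ⊆ t) : bt t ≤ x :=
  mn_le (by simp [Finset.mem_filter, hx, hIcc])

lemma bt_le_MX (h : t.Nonempty) : bt t ≤ MX t := le_MX (bt_mem h)

lemma mn_le_bt (h : t.Nonempty) : mn t ≤ bt t := mn_le (bt_mem h)

lemma bt_pred_not_mem (h : t.Nonempty) (h1 : ∀ x ∈ t, 1 ≤ x) : bt t - 1 ∉ t := by
  intro hmem
  rcases Nat.eq_or_lt_of_le (h1 _ (bt_mem h)) with heq | hlt
  · have : (0:ℕ) ∈ t := by simpa [← heq] using hmem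
    exact absurd (h1 0 this) (by norm_num)
  · -- bt ≥ 2
    have hsub : Finset.Icc (bt t - 1) (MX t) ⊆ t := by
      intro y hy
      rw [Finset.mem_Icc] at hy
      rcases Nat.eq_or_lt_of_le hy.1 with heq2 | hlt2
      · rwa [← heq2]
      · exact bt_Icc_subset h (by rw [Finset.mem_Icc]; omega)
    have := bt_min hmem hsub
    omega

end basic

lemma MX_eq {t : Finset ℕ} {a : ℕ} (hmem : a ∈ t) (hub : ∀ x ∈ t, x ≤ a) : MX t = a :=
  le_antisymm (hub _ (MX_mem ⟨a, hmem⟩)) (le_MX hmem)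

lemma mn_eq {t : Finset ℕ} {a : ℕ} (hmem : a ∈ t) (hlb : ∀ x ∈ t, a ≤ x) : mn t = a :=
  le_antisymm (mn_le hmem) (hlb _ (mn_mem ⟨a, hmem⟩))

lemma bt_eq {t : Finset ℕ} {a : ℕ} (hne : t.Nonempty) (hmem : a ∈ t)
    (hIcc : Finset.Icc a (MX t) ⊆ t)
    (hmin : ∀ y ∈ t, Finset.Icc y (MX t) ⊆ t → a ≤ y) : bt t = a :=
  le_antisymm (bt_min hmem hIcc) (hmin _ (bt_mem hne) (bt_Icc_subset hne))

lemma Φ_pos {t : Finset ℕ} (h : mn t + bt t ≤ MX t + 1) :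
    Φ t = insert (MX t + 1) ((t.erase (mn t)).erase (MX t + 1 - mn t)) := by
  unfold Φ; rw [if_pos h]

lemma Φ_neg {t : Finset ℕ} (h : ¬ (mn t + bt t ≤ MX t + 1)) :
    Φ t = insert (MX t + 1 - bt t) (insert (bt t - 1) (t.erase (MX t))) := by
  unfold Φ; rw [if_neg h]

section cases
variable {t : Finset ℕ}

/-- In case A, `2 * mn t ≤ MX t`. -/
lemma caseA_two_mn_le (h1 : ∀ x ∈ t, 1 ≤ x) (hne : t.Nonempty) (hnp : ¬ pent t)
    (hA : mn t + bt t ≤ MX t + 1) : 2 * mn t ≤ MX t := by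
  have hsB := mn_le_bt hne
  have hs1 : 1 ≤ mn t := h1 _ (mn_mem hne)
  have hsM : mn t ≤ MX t := le_MX (mn_mem hne)
  rcases Nat.lt_or_ge (mn t) (bt t) with h | h
  · omega
  · have hEq : bt t = mn t := le_antisymm h hsB
    have hsub2 : Finset.Icc (mn t) (MX t) ⊆ t := by
      rw [← hEq]; exact bt_Icc_subset hne
    have hT : t = Finset.Icc (mn t) (MX t) :=
      Finset.Subset.antisymm
        (fun x hx => Finset.mem_Icc.mpr ⟨mn_le hx, le_MX hx⟩) hsub2
    have hcard : t.card = MX t + 1 - mn t := by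
      nth_rewrite 1 [hT]
      rw [Nat.card_Icc]
    by_contra hlt
    have hM : MX t = 2 * mn t - 1 := by omega
    apply hnp
    refine ⟨by omega, Or.inl ?_⟩
    rw [hcard]
    nth_rewrite 1 [hT]
    congr 1 <;> omega

lemma caseA_main (h1 : ∀ x ∈ t, 1 ≤ x) (hne : t.Nonempty) (hnp : ¬ pent t)
    (hA : mn t + bt t ≤ MX t + 1) :
    (∀ x ∈ Φ t, 1 ≤ x) ∧ (Φ t).sum id = t.sum id ∧ (Φ t).card + 1 = t.card ∧
    ¬ pent (Φ t) ∧ (Φ t).Nonempty ∧ Φ (Φ t) = t ∧ (∀ x ∈ Φ t, x ≤ t.sum id) := by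
  have h2s : 2 * mn t ≤ MX t := caseA_two_mn_le h1 hne hnp hA
  have hsmem : mn t ∈ t := mn_mem hne
  have hs1 : 1 ≤ mn t := h1 _ hsmem
  have hBle : bt t ≤ MX t + 1 - mn t := by omega
  have hw : MX t + 1 - mn t ∈ t := bt_Icc_subset hne (Finset.mem_Icc.mpr ⟨hBle, by omega⟩)
  have hwne : MX t + 1 - mn t ≠ mn t := by omega
  have hM1 : MX t + 1 ∉ t := fun h => by have := le_MX h; omega
  have hw' : MX t + 1 - mn t ∈ t.erase (mn t) := Finset.mem_erase.mpr ⟨hwne, hw⟩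
  have hΦ : Φ t = insert (MX t + 1) ((t.erase (mn t)).erase (MX t + 1 - mn t)) :=
    Φ_pos hA
  have hnotmem : MX t + 1 ∉ (t.erase (mn t)).erase (MX t + 1 - mn t) := fun h =>
    hM1 (Finset.mem_of_mem_erase (Finset.mem_of_mem_erase h))
  have humem : ∀ x, x ∈ Φ t ↔
      (x = MX t + 1 ∨ (x ∈ t ∧ x ≠ mn t ∧ x ≠ MX t + 1 - mn t)) := by
    intro x
    rw [hΦ]
    simp only [Finset.mem_insert, Finset.mem_erase]
    tauto
  have hMX' : MX (Φ t) = MX t + 1 := by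
    apply MX_eq ((humem _).mpr (Or.inl rfl))
    intro x hx
    rcases (humem x).mp hx with rfl | ⟨hxt, _, _⟩
    · exact le_rfl
    · exact le_trans (le_MX hxt) (by omega)
  have hmn' : ∀ x ∈ Φ t, mn t < x := by
    intro x hx
    rcases (humem x).mp hx with rfl | ⟨hxt, hxs, _⟩
    · have := le_MX hsmem; omega
    · have := mn_le hxt; omega
  have hΦne : (Φ t).Nonempty := ⟨_, (humem _).mpr (Or.inl rfl)⟩
  have hamem : MX t + 2 - mn t ∈ Φ t := by
    rcases Nat.eq_or_lt_of_le hs1 with h1' | h2'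
    · apply (humem _).mpr (Or.inl (by omega))
    · apply (humem _).mpr (Or.inr ?_)
      refine ⟨bt_Icc_subset hne (Finset.mem_Icc.mpr ⟨by omega, by omega⟩), by omega, by omega⟩
  have hwnot : MX t + 1 - mn t ∉ Φ t := by
    intro h
    rcases (humem _).mp h with h' | ⟨_, _, h'⟩
    · omega
    · exact h' rfl
  have hbt' : bt (Φ t) = MX t + 2 - mn t := by
    apply bt_eq hΦne hamem
    · rw [hMX']
      intro x hx
      rw [Finset.mem_Icc] at hx
      rcases Nat.eq_or_lt_of_le hx.2 with h' | h'
      · exact (humem _).mpr (Or.inl h')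
      · apply (humem _).mpr (Or.inr ?_)
        refine ⟨bt_Icc_subset hne (Finset.mem_Icc.mpr ⟨by omega, by omega⟩), by omega, by omega⟩
    · intro y hy hIcc
      rw [hMX'] at hIcc
      by_contra hcon
      exact hwnot (hIcc (Finset.mem_Icc.mpr (by
        have := hmn' y hy
        constructor <;> omega)))
  have hbranch : ¬ (mn (Φ t) + bt (Φ t) ≤ MX (Φ t) + 1) := by
    have := hmn' _ (mn_mem hΦne)
    rw [hMX', hbt']
    omega
  refine ⟨?_, ?_, ?_, ?_, hΦne, ?_, ?_⟩
  · -- parts positive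
    intro x hx
    rcases (humem x).mp hx with rfl | ⟨hxt, _, _⟩
    · omega
    · exact h1 _ hxt
  · -- sum preserved
    have e1 := Finset.sum_erase_add (t.erase (mn t)) id hw'
    have e2 := Finset.sum_erase_add t id hsmem
    have e3 : (Φ t).sum id = id (MX t + 1) +
        ((t.erase (mn t)).erase (MX t + 1 - mn t)).sum id := by
      rw [hΦ]; exact Finset.sum_insert hnotmem
    have b1 : ((t.erase (mn t)).erase (MX t + 1 - mn t)).sum id
        = ∑ x ∈ (t.erase (mn t)).erase (MX t + 1 - mn t), x := rfl
    have b2 : (t.erase (mn t)).sum id = ∑ x ∈ t.erase (mn t), x := rfl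
    have b3 : t.sum id = ∑ x ∈ t, x := rfl
    have b4 : (Φ t).sum id = ∑ x ∈ Φ t, x := rfl
    simp only [id_eq] at e1 e2 e3
    omega
  · -- card
    have hcard2 : 2 ≤ t.card := by
      have hsub : ({mn t, MX t + 1 - mn t} : Finset ℕ) ⊆ t := by
        intro x hx
        rcases Finset.mem_insert.mp hx with rfl | hx
        · exact hsmem
        · rwa [Finset.mem_singleton.mp hx]
      have := Finset.card_le_card hsub
      rwa [Finset.card_pair (Ne.symm hwne)] at this
    rw [hΦ, Finset.card_insert_of_notMem hnotmem, Finset.card_erase_of_mem hw',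
      Finset.card_erase_of_mem hsmem]
    omega
  · -- not pent
    intro hp
    obtain ⟨hc1, hsh | hsh⟩ := hp
    all_goals set c := (Φ t).card with hc
    · have m1 : MX t + 2 - mn t ∈ Finset.Icc c (2 * c - 1) := by
        rw [← hsh]; exact hamem
      have m2 : MX t + 1 ∈ Finset.Icc c (2 * c - 1) := by
        rw [← hsh]; exact (humem _).mpr (Or.inl rfl)
      have m3 : 2 * c - 1 ∈ Φ t := by
        rw [hsh]; exact Finset.mem_Icc.mpr ⟨by omega, le_rfl⟩
      have m4 : MX t + 1 - mn t ∉ Finset.Icc c (2 * c - 1) := by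
        rw [← hsh]; exact hwnot
      have m5 : 2 * c - 1 ≤ MX t + 1 := by
        have := le_MX m3; rw [hMX'] at this; exact this
      rw [Finset.mem_Icc] at m1 m2 m4
      push_neg at m4
      omega
    · have m1 : MX t + 2 - mn t ∈ Finset.Icc (c + 1) (2 * c) := by
        rw [← hsh]; exact hamem
      have m2 : MX t + 1 ∈ Finset.Icc (c + 1) (2 * c) := by
        rw [← hsh]; exact (humem _).mpr (Or.inl rfl)
      have m3 : 2 * c ∈ Φ t := by
        rw [hsh]; exact Finset.mem_Icc.mpr ⟨by omega, le_rfl⟩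
      have m4 : MX t + 1 - mn t ∉ Finset.Icc (c + 1) (2 * c) := by
        rw [← hsh]; exact hwnot
      have m5 : 2 * c ≤ MX t + 1 := by
        have := le_MX m3; rw [hMX'] at this; exact this
      rw [Finset.mem_Icc] at m1 m2 m4
      push_neg at m4
      omega
  · -- involution
    rw [Φ_neg hbranch, hMX', hbt']
    have r1 : MX t + 1 + 1 - (MX t + 2 - mn t) = mn t := by omega
    have r2 : MX t + 2 - mn t - 1 = MX t + 1 - mn t := by omega
    rw [r1, r2, hΦ, Finset.erase_insert hnotmem, Finset.insert_erase hw',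
      Finset.insert_erase hsmem]
  · -- bounded by sum
    intro x hx
    have hub : x ≤ MX t + 1 := by
      have := le_MX hx; rwa [hMX'] at this
    have hsub : ({mn t, MX t} : Finset ℕ) ⊆ t := by
      intro y hy
      rcases Finset.mem_insert.mp hy with rfl | hy
      · exact hsmem
      · rw [Finset.mem_singleton.mp hy]; exact MX_mem hne
    have hsum : (({mn t, MX t} : Finset ℕ)).sum id ≤ t.sum id :=
      Finset.sum_le_sum_of_subset hsub
    rw [Finset.sum_pair (by omega : mn t ≠ MX t)] at hsum
    simp only [id_eq] at hsum
    have b3 : t.sum id = ∑ x ∈ t, x := rfl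
    omega

lemma caseB_main (h1 : ∀ x ∈ t, 1 ≤ x) (hne : t.Nonempty) (hnp : ¬ pent t)
    (hB : ¬ (mn t + bt t ≤ MX t + 1)) :
    (∀ x ∈ Φ t, 1 ≤ x) ∧ (Φ t).sum id = t.sum id ∧ (Φ t).card = t.card + 1 ∧
    ¬ pent (Φ t) ∧ (Φ t).Nonempty ∧ Φ (Φ t) = t ∧ (∀ x ∈ Φ t, x ≤ t.sum id) := by
  have hsmem : mn t ∈ t := mn_mem hne
  have hMmem : MX t ∈ t := MX_mem hne
  have hs1 : 1 ≤ mn t := h1 _ hsmem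
  have hsB : mn t ≤ bt t := mn_le_bt hne
  have hBM : bt t ≤ MX t := bt_le_MX hne
  have hsM : mn t ≤ MX t := le_MX hsmem
  have hsgtr : MX t + 1 - bt t < mn t := by omega
  have hB2 : 2 ≤ bt t := by omega
  have hBm1 : bt t - 1 ∉ t := bt_pred_not_mem hne h1
  have hrnot : MX t + 1 - bt t ∉ t := fun h => absurd (mn_le h) (by omega)
  have hlt : MX t + 1 - bt t < bt t - 1 := by
    by_contra hcon
    push_neg at hcon
    have heq1 : MX t + 1 - bt t = bt t - 1 := by omega
    have heqs : mn t = bt t := by omega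
    have hsub2 : Finset.Icc (mn t) (MX t) ⊆ t := by
      rw [heqs]; exact bt_Icc_subset hne
    have hT : t = Finset.Icc (mn t) (MX t) :=
      Finset.Subset.antisymm
        (fun x hx => Finset.mem_Icc.mpr ⟨mn_le hx, le_MX hx⟩) hsub2
    have hcard : t.card = MX t + 1 - mn t := by
      nth_rewrite 1 [hT]
      rw [Nat.card_Icc]
    apply hnp
    refine ⟨by omega, Or.inr ?_⟩
    nth_rewrite 1 [hT]
    congr 1 <;> omega
  have hΦ : Φ t = insert (MX t + 1 - bt t) (insert (bt t - 1) (t.erase (MX t))) :=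
    Φ_neg hB
  have n2 : bt t - 1 ∉ t.erase (MX t) := fun h => hBm1 (Finset.mem_of_mem_erase h)
  have n1 : MX t + 1 - bt t ∉ insert (bt t - 1) (t.erase (MX t)) := by
    intro h
    rcases Finset.mem_insert.mp h with h' | h'
    · omega
    · exact hrnot (Finset.mem_of_mem_erase h')
  have humem : ∀ x, x ∈ Φ t ↔
      (x = MX t + 1 - bt t ∨ x = bt t - 1 ∨ (x ∈ t ∧ x ≠ MX t)) := by
    intro x
    rw [hΦ]
    simp only [Finset.mem_insert, Finset.mem_erase]
    tauto
  have hrmem : MX t + 1 - bt t ∈ Φ t := (humem _).mpr (Or.inl rfl)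
  have hBm1mem : bt t - 1 ∈ Φ t := (humem _).mpr (Or.inr (Or.inl rfl))
  have hΦne : (Φ t).Nonempty := ⟨_, hrmem⟩
  have hMX' : MX (Φ t) = MX t - 1 := by
    apply MX_eq
    · rcases Nat.lt_or_ge (bt t) (MX t) with h' | h'
      · apply (humem _).mpr (Or.inr (Or.inr ?_))
        exact ⟨bt_Icc_subset hne (Finset.mem_Icc.mpr ⟨by omega, by omega⟩), by omega⟩
      · exact (humem _).mpr (Or.inr (Or.inl (by omega)))
    · intro x hx
      rcases (humem x).mp hx with rfl | h' | ⟨hxt, hxM⟩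
      · omega
      · omega
      · have := le_MX hxt; omega
  have hmn' : mn (Φ t) = MX t + 1 - bt t := by
    apply mn_eq hrmem
    intro x hx
    rcases (humem x).mp hx with rfl | h' | ⟨hxt, _⟩
    · exact le_rfl
    · omega
    · have := mn_le hxt; omega
  have hbtle : bt (Φ t) ≤ bt t - 1 := by
    apply bt_min hBm1mem
    rw [hMX']
    intro x hx
    rw [Finset.mem_Icc] at hx
    rcases Nat.eq_or_lt_of_le hx.1 with h' | h'
    · exact (humem _).mpr (Or.inr (Or.inl h'.symm))
    · apply (humem _).mpr (Or.inr (Or.inr ?_))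
      exact ⟨bt_Icc_subset hne (Finset.mem_Icc.mpr ⟨by omega, by omega⟩), by omega⟩
  have hbranch : mn (Φ t) + bt (Φ t) ≤ MX (Φ t) + 1 := by
    rw [hmn', hMX']
    omega
  refine ⟨?_, ?_, ?_, ?_, hΦne, ?_, ?_⟩
  · intro x hx
    rcases (humem x).mp hx with rfl | h' | ⟨hxt, _⟩
    · omega
    · omega
    · exact h1 _ hxt
  · have e2 := Finset.sum_erase_add t id hMmem
    have e3 : (Φ t).sum id = id (MX t + 1 - bt t) +
        (id (bt t - 1) + (t.erase (MX t)).sum id) := by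
      rw [hΦ, Finset.sum_insert n1, Finset.sum_insert n2]
    have b1 : (t.erase (MX t)).sum id = ∑ x ∈ t.erase (MX t), x := rfl
    have b3 : t.sum id = ∑ x ∈ t, x := rfl
    have b4 : (Φ t).sum id = ∑ x ∈ Φ t, x := rfl
    simp only [id_eq] at e2 e3
    omega
  · have hc1 : 1 ≤ t.card := Finset.card_pos.mpr hne
    rw [hΦ, Finset.card_insert_of_notMem n1, Finset.card_insert_of_notMem n2,
      Finset.card_erase_of_mem hMmem]
    omega
  · intro hp
    obtain ⟨hc1, hsh | hsh⟩ := hp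
    all_goals set c := (Φ t).card with hc
    · have mm1 : MX t + 1 - bt t ∈ Finset.Icc c (2 * c - 1) := by
        rw [← hsh]; exact hrmem
      have mm2 : c ∈ Φ t := by
        rw [hsh]; exact Finset.mem_Icc.mpr ⟨le_rfl, by omega⟩
      have mm2' := mn_le mm2
      have mm3 : 2 * c - 1 ∈ Φ t := by
        rw [hsh]; exact Finset.mem_Icc.mpr ⟨by omega, le_rfl⟩
      have mm3' := le_MX mm3
      have mm4 : MX (Φ t) ∈ Finset.Icc c (2 * c - 1) := by
        rw [← hsh]; exact MX_mem hΦne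
      rw [Finset.mem_Icc] at mm1 mm4
      omega
    · have mm1 : MX t + 1 - bt t ∈ Finset.Icc (c + 1) (2 * c) := by
        rw [← hsh]; exact hrmem
      have mm2 : c + 1 ∈ Φ t := by
        rw [hsh]; exact Finset.mem_Icc.mpr ⟨le_rfl, by omega⟩
      have mm2' := mn_le mm2
      have mm3 : 2 * c ∈ Φ t := by
        rw [hsh]; exact Finset.mem_Icc.mpr ⟨by omega, le_rfl⟩
      have mm3' := le_MX mm3
      have mm4 : MX (Φ t) ∈ Finset.Icc (c + 1) (2 * c) := by
        rw [← hsh]; exact MX_mem hΦne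
      rw [Finset.mem_Icc] at mm1 mm4
      omega
  · rw [Φ_pos hbranch, hmn', hMX']
    have q1 : MX t - 1 + 1 = MX t := by omega
    have q2 : MX t - (MX t + 1 - bt t) = bt t - 1 := by omega
    rw [q1, q2, hΦ, Finset.erase_insert n1, Finset.erase_insert n2,
      Finset.insert_erase hMmem]
  · intro x hx
    have hub : x ≤ MX t - 1 := by
      have := le_MX hx; rwa [hMX'] at this
    have hM : id (MX t) ≤ t.sum id :=
      Finset.single_le_sum (f := id) (fun i _ => Nat.zero_le _) hMmem
    simp only [id_eq] at hM
    have b3 : t.sum id = ∑ x ∈ t, x := rfl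
    omega

end cases

lemma mem_unpack {N : ℕ} {t : Finset ℕ} (hN : 1 ≤ N)
    (ht : t ∈ (E N).filter (fun t => ¬ pent t)) :
    (∀ x ∈ t, 1 ≤ x) ∧ t.Nonempty ∧ ¬ pent t ∧ t.sum id = N ∧ t ⊆ Finset.Icc 1 N := by
  rw [Finset.mem_filter, E, Finset.mem_filter, Finset.mem_powerset] at ht
  refine ⟨fun x hx => (Finset.mem_Icc.mp (ht.1.1 hx)).1, ?_, ht.2, ht.1.2, ht.1.1⟩
  rcases Finset.eq_empty_or_nonempty t with rfl | hne
  · simp at ht; omega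
  · exact hne

lemma franklin (N : ℕ) (hN : 1 ≤ N) :
    ∑ t ∈ (E N).filter (fun t => ¬ pent t), (-1 : ℤ)^t.card = 0 := by
  apply Finset.sum_involution (g := fun t _ => Φ t)
  · -- f a + f (Φ a) = 0
    intro t ht
    obtain ⟨h1, hne, hnp, hsum, hsub⟩ := mem_unpack hN ht
    by_cases hA : mn t + bt t ≤ MX t + 1
    · obtain ⟨_, _, hcard, _⟩ := caseA_main h1 hne hnp hA
      rw [← hcard, pow_succ]
      ring
    · obtain ⟨_, _, hcard, _⟩ := caseB_main h1 hne hnp hA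
      rw [hcard, pow_succ]
      ring
  · -- Φ t ≠ t
    intro t ht _
    obtain ⟨h1, hne, hnp, hsum, hsub⟩ := mem_unpack hN ht
    have hc : t.card ≠ 0 := by
      simpa [Finset.card_eq_zero] using hne.ne_empty
    intro heq
    by_cases hA : mn t + bt t ≤ MX t + 1
    · obtain ⟨_, _, hcard, _⟩ := caseA_main h1 hne hnp hA
      rw [heq] at hcard; omega
    · obtain ⟨_, _, hcard, _⟩ := caseB_main h1 hne hnp hA
      rw [heq] at hcard; omega
  · -- Φ t ∈ s
    intro t ht
    obtain ⟨h1, hne, hnp, hsum, hsub⟩ := mem_unpack hN ht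
    have key : (∀ x ∈ Φ t, 1 ≤ x) ∧ (Φ t).sum id = t.sum id ∧ ¬ pent (Φ t) ∧
        (∀ x ∈ Φ t, x ≤ t.sum id) := by
      by_cases hA : mn t + bt t ≤ MX t + 1
      · obtain ⟨k1, k2, _, k4, _, _, k7⟩ := caseA_main h1 hne hnp hA
        exact ⟨k1, k2, k4, k7⟩
      · obtain ⟨k1, k2, _, k4, _, _, k7⟩ := caseB_main h1 hne hnp hA
        exact ⟨k1, k2, k4, k7⟩
    rw [Finset.mem_filter, E, Finset.mem_filter, Finset.mem_powerset]
    refine ⟨⟨fun x hx => ?_, by rw [key.2.1, hsum]⟩, key.2.2.1⟩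
    rw [Finset.mem_Icc]
    exact ⟨key.1 x hx, by have := key.2.2.2 x hx; omega⟩
  · -- involution
    intro t ht
    obtain ⟨h1, hne, hnp, hsum, hsub⟩ := mem_unpack hN ht
    by_cases hA : mn t + bt t ≤ MX t + 1
    · exact (caseA_main h1 hne hnp hA).2.2.2.2.2.1
    · exact (caseB_main h1 hne hnp hA).2.2.2.2.2.1

lemma sum_Icc_id_mul_two (a b : ℕ) (h : a ≤ b) :
    (∑ i ∈ Finset.Icc a b, i) * 2 = (a + b) * (b + 1 - a) := by
  rw [← Finset.Ico_add_one_right_eq_Icc, Finset.sum_Ico_eq_sum_range]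
  have h2 := Finset.sum_range_id_mul_two (b + 1 - a)
  have h3 : ∑ i ∈ Finset.range (b + 1 - a), (a + i)
      = (b + 1 - a) * a + ∑ i ∈ Finset.range (b + 1 - a), i := by
    rw [Finset.sum_add_distrib, Finset.sum_const, smul_eq_mul, Finset.card_range]
  rw [h3, add_mul, h2]
  cases' Nat.le.dest h with c hc
  subst hc
  have e1 : a + c + 1 - a = c + 1 := by omega
  have e2 : c + 1 - 1 = c := by omega
  rw [e1, e2]
  ring

lemma coeff_f_one (N : ℕ) :
    PowerSeries.coeff N (f 1) = ∑ S ∈ E N, (-1 : ℤ)^S.card := by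
  rw [f, PowerSeries.coeff_mk]
  simp only [one_mul]
  rw [Finset.prod_sub, map_sum, E, Finset.sum_filter]
  refine Finset.sum_congr rfl fun S hS => ?_
  rw [Finset.prod_const_one, mul_one, Finset.prod_pow_eq_pow_sum]
  have : ((-1 : PowerSeries ℤ) ^ S.card * X ^ (∑ i ∈ S, i))
      = (PowerSeries.C ((-1 : ℤ)^S.card)) * X ^ (∑ i ∈ S, i) := by
    rw [map_pow, map_neg, map_one]
  rw [this, PowerSeries.coeff_C_mul, PowerSeries.coeff_X_pow]
  have hid : S.sum id = ∑ i ∈ S, i := rfl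
  rw [hid]
  by_cases hc : (∑ i ∈ S, i) = N <;> simp [hc, Ne.symm, eq_comm]

lemma halve {n : ℤ} {N : ℕ} (h : n * (3 * n - 1) / 2 = (N : ℤ)) :
    n * (3 * n - 1) = 2 * N := by
  obtain ⟨c, hc⟩ | ⟨c, hc⟩ := Int.even_or_odd n
  · subst hc
    have he : (c + c) * (3 * (c + c) - 1) = 2 * (c * (6 * c - 1)) := by ring
    rw [he] at h ⊢
    omega
  · subst hc
    have he : (2 * c + 1) * (3 * (2 * c + 1) - 1) = 2 * ((2 * c + 1) * (3 * c + 1)) := by ring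
    rw [he] at h ⊢
    omega

lemma mem_EP_pos {N k : ℕ} (hk : 1 ≤ k) (h : k * (3 * k - 1) = 2 * N) :
    Finset.Icc k (2 * k - 1) ∈ (E N).filter pent ∧ (Finset.Icc k (2 * k - 1)).card = k := by
  have hcard : (Finset.Icc k (2 * k - 1)).card = k := by rw [Nat.card_Icc]; omega
  have hsum2 := sum_Icc_id_mul_two k (2 * k - 1) (by omega)
  have hsum2' : (∑ i ∈ Finset.Icc k (2 * k - 1), i) * 2 = k * (3 * k - 1) := by
    rw [hsum2]
    have e1 : k + (2 * k - 1) = 3 * k - 1 := by omega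
    have e2 : 2 * k - 1 + 1 - k = k := by omega
    rw [e1, e2, Nat.mul_comm]
  have hsum : (Finset.Icc k (2 * k - 1)).sum id = N := by
    have hid : (Finset.Icc k (2 * k - 1)).sum id = ∑ i ∈ Finset.Icc k (2 * k - 1), i :=
      Finset.sum_congr rfl (fun x _ => rfl)
    omega
  constructor
  · rw [Finset.mem_filter]
    constructor
    · rw [E, Finset.mem_filter, Finset.mem_powerset]
      refine ⟨fun x hx => ?_, hsum⟩
      rw [Finset.mem_Icc] at hx ⊢
      have hineq : 2 * (2 * k - 1) ≤ k * (3 * k - 1) := by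
        rcases Nat.lt_or_ge k 2 with h2 | h2
        · interval_cases k <;> norm_num
        · exact Nat.mul_le_mul h2 (by omega)
      omega
    · exact ⟨by omega, Or.inl (by rw [hcard])⟩
  · exact hcard

lemma mem_EP_neg {N k : ℕ} (hk : 1 ≤ k) (h : k * (3 * k + 1) = 2 * N) :
    Finset.Icc (k + 1) (2 * k) ∈ (E N).filter pent ∧ (Finset.Icc (k + 1) (2 * k)).card = k := by
  have hcard : (Finset.Icc (k + 1) (2 * k)).card = k := by rw [Nat.card_Icc]; omega
  have hsum2 := sum_Icc_id_mul_two (k + 1) (2 * k) (by omega)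
  have hsum2' : (∑ i ∈ Finset.Icc (k + 1) (2 * k), i) * 2 = k * (3 * k + 1) := by
    rw [hsum2]
    have e1 : k + 1 + 2 * k = 3 * k + 1 := by omega
    have e2 : 2 * k + 1 - (k + 1) = k := by omega
    rw [e1, e2, Nat.mul_comm]
  have hsum : (Finset.Icc (k + 1) (2 * k)).sum id = N := by
    have hid : (Finset.Icc (k + 1) (2 * k)).sum id = ∑ i ∈ Finset.Icc (k + 1) (2 * k), i :=
      Finset.sum_congr rfl (fun x _ => rfl)
    omega
  constructor
  · rw [Finset.mem_filter]
    constructor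
    · rw [E, Finset.mem_filter, Finset.mem_powerset]
      refine ⟨fun x hx => ?_, hsum⟩
      rw [Finset.mem_Icc] at hx ⊢
      have hineq : 2 * (2 * k) ≤ k * (3 * k + 1) := by
        have : k * 4 ≤ k * (3 * k + 1) := Nat.mul_le_mul_left k (by omega)
        omega
      omega
    · exact ⟨by omega, Or.inr (by rw [hcard])⟩
  · exact hcard

lemma pent_side (N : ℕ) (hN : 1 ≤ N) :
    (∑ n ∈ Finset.Icc (-(N : ℤ)) (N : ℤ),
      if n * (3 * n - 1) / 2 = (N : ℤ) then (-1 : ℤ) ^ n.natAbs else 0)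
    = ∑ S ∈ (E N).filter pent, (-1 : ℤ)^S.card := by
  rw [← Finset.sum_filter]
  refine Finset.sum_nbij'
    (i := fun n => if 0 ≤ n then Finset.Icc n.natAbs (2 * n.natAbs - 1)
      else Finset.Icc (n.natAbs + 1) (2 * n.natAbs))
    (j := fun S => if S.card ∈ S then (S.card : ℤ) else -(S.card : ℤ))
    ?_ ?_ ?_ ?_ ?_
  · -- maps to
    intro n hn
    rw [Finset.mem_filter, Finset.mem_Icc] at hn
    have h2 := halve hn.2
    have hn0 : n ≠ 0 := by rintro rfl; simp at h2; omega
    rcases le_or_gt 0 n with hpos | hneg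
    · have hk : 1 ≤ n.natAbs := by omega
      have hcast : (n.natAbs : ℤ) = n := Int.natAbs_of_nonneg hpos
      have hnat : n.natAbs * (3 * n.natAbs - 1) = 2 * N := by
        have : (n.natAbs : ℤ) * (3 * (n.natAbs : ℤ) - 1) = 2 * N := by rw [hcast]; exact h2
        have h3 : ((3 * n.natAbs - 1 : ℕ) : ℤ) = 3 * (n.natAbs : ℤ) - 1 := by
          push_cast [Nat.cast_sub (by omega : 1 ≤ 3 * n.natAbs)]; ring
        exact_mod_cast (h3 ▸ this : (n.natAbs : ℤ) * ((3 * n.natAbs - 1 : ℕ) : ℤ) = 2 * N)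
      simpa [hpos] using (mem_EP_pos hk hnat).1
    · have hk : 1 ≤ n.natAbs := by omega
      have hcast : (n.natAbs : ℤ) = -n := by omega
      have hnat : n.natAbs * (3 * n.natAbs + 1) = 2 * N := by
        have he : (n.natAbs : ℤ) * (3 * (n.natAbs : ℤ) + 1) = n * (3 * n - 1) := by
          rw [hcast]; ring
        exact_mod_cast he.trans h2
      simpa [not_le.mpr hneg] using (mem_EP_neg hk hnat).1
  · -- j maps to
    intro S hS
    rw [Finset.mem_filter] at hS
    have hSE := hS.1
    have hk := hS.2.1
    have hshape := hS.2.2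
    rw [E, Finset.mem_filter, Finset.mem_powerset] at hSE
    set m := S.card with hm
    rcases hshape with hsh | hsh
    · have hmem : m ∈ S := by rw [hsh]; rw [Finset.mem_Icc]; omega
      have hsum2 := sum_Icc_id_mul_two m (2 * m - 1) (by omega)
      have h2N : m * (3 * m - 1) = 2 * N := by
        have : (Finset.Icc m (2 * m - 1)).sum id = N := by rw [← hsh]; exact hSE.2
        have hid : (Finset.Icc m (2 * m - 1)).sum id = ∑ i ∈ Finset.Icc m (2 * m - 1), i :=
          Finset.sum_congr rfl (fun x _ => rfl)
        have e1 : m + (2 * m - 1) = 3 * m - 1 := by omega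
        have e2 : 2 * m - 1 + 1 - m = m := by omega
        rw [e1, e2, Nat.mul_comm (3 * m - 1) m] at hsum2
        omega
      rw [Finset.mem_filter, Finset.mem_Icc]
      simp only [hmem, if_pos]
      have hmN : m ≤ N := by
        have : m * 2 ≤ m * (3 * m - 1) := Nat.mul_le_mul_left m (by omega)
        omega
      refine ⟨⟨by omega, by exact_mod_cast hmN⟩, ?_⟩
      have h3 : (m : ℤ) * (3 * m - 1) = 2 * N := by
        have hc : ((3 * m - 1 : ℕ) : ℤ) = 3 * (m : ℤ) - 1 := by
          push_cast [Nat.cast_sub (by omega : 1 ≤ 3 * m)]; ring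
        exact_mod_cast (hc ▸ (by exact_mod_cast h2N : (m : ℤ) * ((3 * m - 1 : ℕ) : ℤ) = 2 * N))
      rw [h3]
      omega
    · have hmem : m ∉ S := by rw [hsh]; rw [Finset.mem_Icc]; omega
      have hsum2 := sum_Icc_id_mul_two (m + 1) (2 * m) (by omega)
      have h2N : m * (3 * m + 1) = 2 * N := by
        have : (Finset.Icc (m + 1) (2 * m)).sum id = N := by rw [← hsh]; exact hSE.2
        have hid : (Finset.Icc (m + 1) (2 * m)).sum id = ∑ i ∈ Finset.Icc (m + 1) (2 * m), i :=
          Finset.sum_congr rfl (fun x _ => rfl)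
        have e1 : m + 1 + 2 * m = 3 * m + 1 := by omega
        have e2 : 2 * m + 1 - (m + 1) = m := by omega
        rw [e1, e2, Nat.mul_comm (3 * m + 1) m] at hsum2
        omega
      rw [Finset.mem_filter, Finset.mem_Icc]
      simp only [hmem, if_neg, not_false_iff]
      have hmN : m ≤ N := by
        have : m * 2 ≤ m * (3 * m + 1) := Nat.mul_le_mul_left m (by omega)
        omega
      refine ⟨⟨by omega, by omega⟩, ?_⟩
      have h3 : (-(m : ℤ)) * (3 * (-(m : ℤ)) - 1) = 2 * N := by
        have : (-(m : ℤ)) * (3 * (-(m : ℤ)) - 1) = (m : ℤ) * (3 * m + 1) := by ring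
        rw [this]
        exact_mod_cast h2N
      rw [h3]
      omega
  · -- left inverse
    intro n hn
    rw [Finset.mem_filter, Finset.mem_Icc] at hn
    have h2 := halve hn.2
    have hn0 : n ≠ 0 := by rintro rfl; simp at h2; omega
    rcases le_or_gt 0 n with hpos | hneg
    · have hk : 1 ≤ n.natAbs := by omega
      simp only [hpos, if_pos]
      have hmem : n.natAbs ∈ Finset.Icc n.natAbs (2 * n.natAbs - 1) := by
        rw [Finset.mem_Icc]; omega
      have hcard : (Finset.Icc n.natAbs (2 * n.natAbs - 1)).card = n.natAbs := by
        rw [Nat.card_Icc]; omega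
      rw [hcard, if_pos (hcard ▸ hmem)]
      omega
    · have hk : 1 ≤ n.natAbs := by omega
      simp only [not_le.mpr hneg, if_neg, not_false_iff]
      have hcard : (Finset.Icc (n.natAbs + 1) (2 * n.natAbs)).card = n.natAbs := by
        rw [Nat.card_Icc]; omega
      have hmem : n.natAbs ∉ Finset.Icc (n.natAbs + 1) (2 * n.natAbs) := by
        rw [Finset.mem_Icc]; omega
      rw [hcard, if_neg hmem]
      omega
  · -- right inverse
    intro S hS
    rw [Finset.mem_filter] at hS
    obtain ⟨hk, hshape⟩ := hS.2
    set m := S.card with hm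
    rcases hshape with hsh | hsh
    · have hmem : m ∈ S := by rw [hsh]; rw [Finset.mem_Icc]; omega
      rw [if_pos hmem]
      have : (0:ℤ) ≤ (m:ℤ) := by omega
      rw [if_pos this]
      simp only [Int.natAbs_natCast]
      exact hsh.symm
    · have hmem : m ∉ S := by rw [hsh]; rw [Finset.mem_Icc]; omega
      rw [if_neg hmem]
      have hneg : ¬ (0:ℤ) ≤ -(m:ℤ) := by simp; omega
      rw [if_neg hneg]
      simp only [Int.natAbs_neg, Int.natAbs_natCast]
      exact hsh.symm
  · -- values
    intro n hn
    rw [Finset.mem_filter, Finset.mem_Icc] at hn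
    have h2 := halve hn.2
    have hn0 : n ≠ 0 := by rintro rfl; simp at h2; omega
    rcases le_or_gt 0 n with hpos | hneg
    · simp only [hpos, if_pos]
      rw [(by rw [Nat.card_Icc]; omega :
        (Finset.Icc n.natAbs (2 * n.natAbs - 1)).card = n.natAbs)]
    · simp only [not_le.mpr hneg, if_neg, not_false_iff]
      rw [(by rw [Nat.card_Icc]; omega :
        (Finset.Icc (n.natAbs + 1) (2 * n.natAbs)).card = n.natAbs)]

end PentAux

open PentAux in
theorem stmt3 :
    (PowerSeries.mk fun N : ℕ => ∑ n ∈ Finset.Icc (-(N : ℤ)) (N : ℤ),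
      if n * (3 * n - 1) / 2 = (N : ℤ) then (-1 : ℤ) ^ n.natAbs else 0) = f 1 := by
  ext N
  rw [PowerSeries.coeff_mk, coeff_f_one]
  rcases Nat.eq_zero_or_pos N with rfl | hN
  · have hE : E 0 = {∅} := rfl
    rw [hE, Nat.cast_zero, neg_zero, Finset.Icc_self, Finset.sum_singleton,
      Finset.sum_singleton]
    norm_num
  · rw [← Finset.sum_filter_add_sum_filter_not (E N) pent (fun S => (-1 : ℤ)^S.card),
      franklin N hN, add_zero, pent_side N hN]
end

section
/- Let α ≥ 0, m ≥ 1 with gcd(m,6)=1, k ≥ 1, and set N = 2^6·3^(α+1)·m. Let d be a divisor of N, write d = 2^(r1)·3^(r2)·t with 0 ≤ r1 ≤ 6, 0 ≤ r2 ≤ α+1, t | m. Define G1 = gcd(d,24)^2/gcd(d,2^4·3^(α+1)m)^2, G2 = gcd(d,48)^2/gcd(d,2^4·3^(α+1)m)^2, G3 = gcd(d,2^3·3^(α+1)m)^2/gcd(d,2^4·3^(α+1)m)^2, and L = 3^α·m·(−4G1+G2+4G3−1) + 2^k·(4G3−1). Then L ≥ 0; in fact L ≥ 3·2^k when r1 ≤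 3, and L = 0 when 4 ≤ r1 ≤ 6. -/
lemma gcd_pp (p a b : ℕ) : Nat.gcd (p ^ a) (p ^ b) = p ^ min a b := by
  rcases le_total a b with h | h
  · rw [min_eq_left h, Nat.gcd_eq_left (pow_dvd_pow p h)]
  · rw [min_eq_right h, Nat.gcd_eq_right (pow_dvd_pow p h)]

lemma gcd_mul_mul {a b c d : ℕ} (hcd : Nat.Coprime c d) (hbc : Nat.Coprime b c)
    (had : Nat.Coprime a d) : Nat.gcd (a * b) (c * d) = Nat.gcd a c * Nat.gcd b d := by
  rw [Nat.Coprime.gcd_mul _ hcd, Nat.Coprime.gcd_mul_right_cancel a hbc,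
    Nat.Coprime.gcd_mul_left_cancel b had]

theorem stmt9 (α m k r1 r2 t d : ℕ) (hm : 1 ≤ m) (hk : 1 ≤ k) (hgcd : Nat.gcd m 6 = 1)
    (hd : d ∣ 2 ^ 6 * 3 ^ (α + 1) * m) (hr1 : r1 ≤ 6) (hr2 : r2 ≤ α + 1) (ht : t ∣ m)
    (hdd : d = 2 ^ r1 * 3 ^ r2 * t) :
    let G1 : ℚ := (Nat.gcd d 24 : ℚ) ^ 2 / (Nat.gcd d (2 ^ 4 * 3 ^ (α + 1) * m) : ℚ) ^ 2
    let G2 : ℚ := (Nat.gcd d 48 : ℚ) ^ 2 / (Nat.gcd d (2 ^ 4 * 3 ^ (α + 1) * m) : ℚ) ^ 2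
    let G3 : ℚ := (Nat.gcd d (2 ^ 3 * 3 ^ (α + 1) * m) : ℚ) ^ 2 /
      (Nat.gcd d (2 ^ 4 * 3 ^ (α + 1) * m) : ℚ) ^ 2
    let L : ℚ := 3 ^ α * m * (-4 * G1 + G2 + 4 * G3 - 1) + 2 ^ k * (4 * G3 - 1)
    0 ≤ L ∧ (r1 ≤ 3 → 3 * 2 ^ k ≤ L) ∧ (4 ≤ r1 → L = 0) := by
  intro G1 G2 G3 L
  -- basic coprimality
  have hm2 : Nat.Coprime m 2 := Nat.Coprime.coprime_dvd_right (by norm_num) hgcd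
  have hm3 : Nat.Coprime m 3 := Nat.Coprime.coprime_dvd_right (by norm_num) hgcd
  have ht2 : Nat.Coprime t 2 := Nat.Coprime.coprime_dvd_left ht hm2
  have ht3 : Nat.Coprime t 3 := Nat.Coprime.coprime_dvd_left ht hm3
  have h32 : Nat.Coprime 3 2 := by decide
  -- odd part of d
  set B : ℕ := 3 ^ r2 * t with hB
  have hBodd : Nat.Coprime B 2 := Nat.Coprime.mul (h32.pow_left r2) ht2
  have hModd : Nat.Coprime (3 ^ (α + 1) * m) 2 := Nat.Coprime.mul (h32.pow_left _) hm2
  have hdB : d = 2 ^ r1 * B := by rw [hdd, hB, mul_assoc]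
  -- gcd of odd parts
  have hBM : Nat.gcd B (3 ^ (α + 1) * m) = B := by
    rw [hB, gcd_mul_mul (hm3.symm.pow_left _) (ht3.pow_right _) (hm3.symm.pow_left r2),
      gcd_pp, min_eq_left hr2, Nat.gcd_eq_left ht]
  have key : ∀ s : ℕ, Nat.gcd d (2 ^ s * (3 ^ (α + 1) * m))
      = 2 ^ min r1 s * B := by
    intro s
    rw [hdB, gcd_mul_mul (hModd.symm.pow_left s) (hBodd.pow_right s)
      (hModd.symm.pow_left r1), gcd_pp, hBM]
  have h4 : Nat.gcd d (2 ^ 4 * 3 ^ (α + 1) * m) = 2 ^ min r1 4 * B := by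
    rw [mul_assoc]; exact key 4
  have h3 : Nat.gcd d (2 ^ 3 * 3 ^ (α + 1) * m) = 2 ^ min r1 3 * B := by
    rw [mul_assoc]; exact key 3
  -- gcd with 24 and 48
  set A : ℕ := Nat.gcd B 3 with hA
  have h24 : Nat.gcd d 24 = 2 ^ min r1 3 * A := by
    have : (24 : ℕ) = 2 ^ 3 * 3 := by norm_num
    rw [hdB, this, gcd_mul_mul (h32.symm.pow_left 3) (hBodd.pow_right 3) (h32.symm.pow_left r1), gcd_pp]
  have h48 : Nat.gcd d 48 = 2 ^ min r1 4 * A := by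
    have : (48 : ℕ) = 2 ^ 4 * 3 := by norm_num
    rw [hdB, this, gcd_mul_mul (h32.symm.pow_left 4) (hBodd.pow_right 4) (h32.symm.pow_left r1), gcd_pp]
  -- positivity and bounds
  have htpos : 0 < t := Nat.pos_of_dvd_of_pos ht hm
  have hBpos : 0 < B := Nat.mul_pos (pow_pos (by norm_num) _) htpos
  have hAdvd : A ∣ B := Nat.gcd_dvd_left B 3
  have hAB : A ≤ B := Nat.le_of_dvd hBpos hAdvd
  have hApos : 0 < A := Nat.pos_of_dvd_of_pos (Nat.gcd_dvd_right B 3) (by norm_num)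
  have hxQ : (0:ℚ) < (A : ℚ) := by exact_mod_cast hApos
  have hyQ : (0:ℚ) < (B : ℚ) := by exact_mod_cast hBpos
  have hxy : (A : ℚ) ≤ (B : ℚ) := by exact_mod_cast hAB
  have hmQ : (1:ℚ) ≤ (m : ℚ) := by exact_mod_cast hm
  rcases le_or_gt r1 3 with hc | hc
  · -- r1 ≤ 3
    have e3 : min r1 3 = r1 := min_eq_left hc
    have e4 : min r1 4 = r1 := min_eq_left (by omega)
    have hLval : L = 3 * 3 ^ α * m * (1 - (A:ℚ)^2/(B:ℚ)^2) + 3 * 2 ^ k := by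
      simp only [L, G1, G2, G3, h24, h4, h48, h3, e3, e4]
      push_cast
      have h2r : ((2:ℚ)^r1) ≠ 0 := by positivity
      field_simp
      ring
    have hq1 : (A:ℚ)^2/(B:ℚ)^2 ≤ 1 := by
      rw [div_le_one (by positivity)]
      nlinarith
    have hge : 3 * 2 ^ k ≤ L := by
      rw [hLval]
      have h1 : (0:ℚ) ≤ 3 * 3 ^ α * m * (1 - (A:ℚ)^2/(B:ℚ)^2) := by
        have : (0:ℚ) ≤ 1 - (A:ℚ)^2/(B:ℚ)^2 := by linarith
        positivity
      linarith
    have h0 : (0:ℚ) ≤ L := by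
      have : (0:ℚ) ≤ 3 * 2 ^ k := by positivity
      linarith
    exact ⟨h0, fun _ => hge, fun h => absurd h (by omega)⟩
  · -- r1 ≥ 4
    have e3 : min r1 3 = 3 := min_eq_right (by omega)
    have e4 : min r1 4 = 4 := min_eq_right (by omega)
    have hLval : L = 0 := by
      simp only [L, G1, G2, G3, h24, h4, h48, h3, e3, e4]
      push_cast
      field_simp
      ring
    exact ⟨le_of_eq hLval.symm, fun h => absurd h (by omega), fun _ => hLval⟩
end
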